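/- arXiv:1405.2238 — 4 statements merged into one kernel-verified Lean document; each statement's English description precedes it below -/
import Mathlib

section
/- Let ⊙ be a non-degenerate pseudo-multiplication on [0,∞]. A σ-maxitive measure τ on a σ-algebra 𝓑 satisfies the Radon–Nikodym property with respect to the idempotent ⊙-integral if and only if τ is σ-⊙-finite and σ-principal. -/
open scoped ENNReal
open Set Filter MeasureTheory

variable {E : Type*}

/-- `f : E → [0,∞]` is `𝓑`-measurable: `{f > t}` is measurable for every `t`. -/
def Premeasurable [MeasurableSpace E] (f : E → ℝ≥0∞) : Prop :=
  ∀ t : ℝ≥0∞, MeasurableSet {x | t < f x}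

/-- A maxitive measure on the σ-algebra of measurable subsets of `E`. -/
def Maxitive [MeasurableSpace E] (ν : Set E → ℝ≥0∞) : Prop :=
  ν ∅ = 0 ∧ ∀ A B : Set E, MeasurableSet A → MeasurableSet B →
    ν (A ∪ B) = max (ν A) (ν B)

/-- A σ-maxitive measure: a maxitive measure commuting with countable nondecreasing unions. -/
def SigmaMaxitive [MeasurableSpace E] (ν : Set E → ℝ≥0∞) : Prop :=
  Maxitive ν ∧ ∀ B : ℕ → Set E, (∀ n, MeasurableSet (B n)) → Monotone B →
    ν (⋃ n, B n) = ⨆ n, ν (B n)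

/-- `N` is `τ`-negligible: it is contained in a measurable set of `τ`-measure zero. -/
def Negligible [MeasurableSpace E] (τ : Set E → ℝ≥0∞) (N : Set E) : Prop :=
  ∃ B : Set E, MeasurableSet B ∧ N ⊆ B ∧ τ B = 0

/-- The `τ`-essential supremum of `f` over `B`: `inf { t > 0 : B ∩ {f > t} is τ-negligible }`. -/
noncomputable def essSupOn [MeasurableSpace E] (τ : Set E → ℝ≥0∞) (f : E → ℝ≥0∞)
    (B : Set E) : ℝ≥0∞ :=
  sInf {t : ℝ≥0∞ | 0 < t ∧ Negligible τ (B ∩ {x | t < f x})}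

/-- `ν ≪ τ`: absolute continuity. -/
def AbsCont [MeasurableSpace E] (ν τ : Set E → ℝ≥0∞) : Prop :=
  ∀ B : Set E, MeasurableSet B → τ B = 0 → ν B = 0

/-- `ν ⋘ τ`: strong absolute continuity, i.e. `ν` has a measurable relative density
with respect to `τ`. -/
def StrongAbsCont [MeasurableSpace E] (ν τ : Set E → ℝ≥0∞) : Prop :=
  ∃ f : E → ℝ≥0∞, Premeasurable f ∧ ∀ B : Set E, MeasurableSet B → ν B = essSupOn τ f B

/-- `c` is a cardinal density of `ν`: `ν B = sup_{x ∈ B} c x` for every measurable `B`. -/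
def IsCardinalDensity [MeasurableSpace E] (ν : Set E → ℝ≥0∞) (c : E → ℝ≥0∞) : Prop :=
  ∀ B : Set E, MeasurableSet B → ν B = ⨆ x ∈ B, c x

/-- `τ` is essential: there exists a σ-finite σ-additive measure `m` with the same
null measurable sets. -/
def Essential [MeasurableSpace E] (τ : Set E → ℝ≥0∞) : Prop :=
  ∃ m : Measure E, SigmaFinite m ∧ ∀ B : Set E, MeasurableSet B → (0 < τ B ↔ 0 < m B)

/-- A σ-ideal of the σ-algebra of measurable sets. -/
def SigmaIdeal [MeasurableSpace E] (I : Set (Set E)) : Prop :=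
  I.Nonempty ∧ (∀ S ∈ I, MeasurableSet S) ∧
  (∀ f : ℕ → Set E, (∀ n, f n ∈ I) → (⋃ n, f n) ∈ I) ∧
  (∀ B S : Set E, MeasurableSet B → S ∈ I → B ⊆ S → B ∈ I)

/-- `τ` is σ-principal: every σ-ideal has a greatest element modulo `τ`-negligible sets. -/
def SigmaPrincipal [MeasurableSpace E] (τ : Set E → ℝ≥0∞) : Prop :=
  ∀ I : Set (Set E), SigmaIdeal I → ∃ L ∈ I, ∀ S ∈ I, Negligible τ (S \ L)

/-- A pseudo-multiplication on `[0,∞]`. -/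
structure PseudoMul where
  op : ℝ≥0∞ → ℝ≥0∞ → ℝ≥0∞
  assoc : ∀ a b c, op (op a b) c = op a (op b c)
  contOn : ContinuousOn (fun q : ℝ≥0∞ × ℝ≥0∞ => op q.1 q.2) (Set.Ioo 0 ⊤ ×ˢ Set.univ)
  contLeft : ∀ t, ContinuousOn (fun s => op s t) (Set.Ioi 0)
  monoLeft : ∀ t, Monotone fun s => op s t
  monoRight : ∀ s, Monotone (op s)
  one : ℝ≥0∞
  one_op : ∀ t, op one t = t
  eq_zero : ∀ s t, op s t = 0 → s = 0 ∨ t = 0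
  zero_op : ∀ t, op 0 t = 0
  op_zero : ∀ t, op t 0 = 0

/-- `t` is `⊙`-finite: `inf_{s > 0} s ⊙ t = 0`. -/
def OdotFinite (p : PseudoMul) (t : ℝ≥0∞) : Prop :=
  (⨅ s ∈ Set.Ioi (0 : ℝ≥0∞), p.op s t) = 0

/-- The idempotent `⊙`-integral `∫_B f ⊙ dτ = sup_{t ∈ [0,∞)} t ⊙ τ (B ∩ {f > t})`. -/
noncomputable def iInt [MeasurableSpace E] (p : PseudoMul) (τ : Set E → ℝ≥0∞)
    (f : E → ℝ≥0∞) (B : Set E) : ℝ≥0∞ :=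
  ⨆ t ∈ Set.Iio (⊤ : ℝ≥0∞), p.op t (τ (B ∩ {x | t < f x}))

/-- `ν ≪_⊙ τ`: `ν B ≤ ∞ ⊙ τ B` for every measurable `B`. -/
def OdotAbsCont [MeasurableSpace E] (p : PseudoMul) (ν τ : Set E → ℝ≥0∞) : Prop :=
  ∀ B : Set E, MeasurableSet B → ν B ≤ p.op ⊤ (τ B)

/-- `ν` is semi-`⊙`-finite. -/
def SemiOdotFinite [MeasurableSpace E] (p : PseudoMul) (ν : Set E → ℝ≥0∞) : Prop :=
  ∀ B : Set E, MeasurableSet B →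
    ν B = ⨆ A ∈ {A : Set E | MeasurableSet A ∧ A ⊆ B ∧ OdotFinite p (ν A)}, ν A

/-- `τ` is σ-`⊙`-finite. -/
def SigmaOdotFinite [MeasurableSpace E] (p : PseudoMul) (τ : Set E → ℝ≥0∞) : Prop :=
  ∃ B : ℕ → Set E, (∀ n, MeasurableSet (B n)) ∧ (⋃ n, B n) = Set.univ ∧
    ∀ n, OdotFinite p (τ (B n))

/-- Continuity from below. -/
def ContFromBelow [MeasurableSpace E] (ν : Set E → ℝ≥0∞) : Prop :=
  ∀ B : ℕ → Set E, (∀ n, MeasurableSet (B n)) → Monotone B →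
    Tendsto (fun n => ν (B n)) atTop (nhds (ν (⋃ n, B n)))

/-- Continuity from above (no finiteness assumption). -/
def ContFromAbove [MeasurableSpace E] (ν : Set E → ℝ≥0∞) : Prop :=
  ∀ B : ℕ → Set E, (∀ n, MeasurableSet (B n)) → Antitone B →
    Tendsto (fun n => ν (B n)) atTop (nhds (ν (⋂ n, B n)))

/-- An optimal measure: a maxitive measure continuous from below and from above. -/
def Optimal [MeasurableSpace E] (ν : Set E → ℝ≥0∞) : Prop :=
  Maxitive ν ∧ ContFromBelow ν ∧ ContFromAbove ν

/-- `τ` has the Radon–Nikodym property with respect to the idempotent `⊙`-integral. -/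
def RNProperty [MeasurableSpace E] (p : PseudoMul) (τ : Set E → ℝ≥0∞) : Prop :=
  ∀ ν : Set E → ℝ≥0∞, SigmaMaxitive ν → OdotAbsCont p ν τ →
    ∃ c : E → ℝ≥0∞, Premeasurable c ∧ ∀ B : Set E, MeasurableSet B → ν B = iInt p τ c B


namespace RNAux

set_option linter.unusedSectionVars false

open Set Filter

variable {E : Type*} [MeasurableSpace E]

/-! ### Rational embedding -/

noncomputable def e (q : ℚ) : ℝ≥0∞ := ENNReal.ofReal (q : ℝ)

lemma e_lt_top (q : ℚ) : e q < ⊤ := ENNReal.ofReal_lt_top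

lemma e_mono {q q' : ℚ} (h : q ≤ q') : e q ≤ e q' :=
  ENNReal.ofReal_le_ofReal (by exact_mod_cast h)

lemma exists_rat_btwn {a b : ℝ≥0∞} (h : a < b) : ∃ q : ℚ, a < e q ∧ e q < b := by
  obtain ⟨q, _, h1, h2⟩ := ENNReal.lt_iff_exists_rat_btwn.mp h
  exact ⟨q, h1, h2⟩

/-! ### PseudoMul basics -/

namespace PM

variable (p : PseudoMul)

lemma one_ne_zero' : p.one ≠ 0 := by
  intro h
  have h1 := p.one_op 1
  rw [h, p.zero_op] at h1
  exact zero_ne_one h1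

lemma one_pos : 0 < p.one := pos_iff_ne_zero.mpr (one_ne_zero' p)

lemma contAt {s : ℝ≥0∞} (hs : 0 < s) (hs' : s < ⊤) (x : ℝ≥0∞) :
    ContinuousAt (fun y => p.op s y) x := by
  have hopen : IsOpen (Set.Ioo (0:ℝ≥0∞) ⊤ ×ˢ (Set.univ : Set ℝ≥0∞)) :=
    isOpen_Ioo.prod isOpen_univ
  have hmem : ((s, x) : ℝ≥0∞ × ℝ≥0∞) ∈ Set.Ioo (0:ℝ≥0∞) ⊤ ×ˢ (Set.univ : Set ℝ≥0∞) :=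
    ⟨⟨hs, hs'⟩, trivial⟩
  have h := ContinuousOn.continuousAt p.contOn (hopen.mem_nhds hmem)
  exact h.comp ((continuous_const.prodMk continuous_id).continuousAt)

lemma map_max {s a b : ℝ≥0∞} : p.op s (max a b) = max (p.op s a) (p.op s b) :=
  (p.monoRight s).map_max

lemma max_map {t a b : ℝ≥0∞} : p.op (max a b) t = max (p.op a t) (p.op b t) :=
  (p.monoLeft t).map_max

lemma map_iSup {s : ℝ≥0∞} (hs : 0 < s) (hs' : s < ⊤) {ι : Sort*} (g : ι → ℝ≥0∞) :
    p.op s (⨆ i, g i) = ⨆ i, p.op s (g i) :=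
  Monotone.map_iSup_of_continuousAt (contAt p hs hs' _) (p.monoRight s) (p.op_zero s)

lemma op_le_of_forall_lt {t x y : ℝ≥0∞} (ht : 0 < t)
    (h : ∀ s, 0 < s → s < t → p.op s x ≤ y) : p.op t x ≤ y := by
  obtain ⟨u, _, hu_mem, hu_tendsto⟩ := exists_seq_strictMono_tendsto' ht
  have hcw : ContinuousWithinAt (fun s => p.op s x) (Set.Ioi 0) t :=
    (p.contLeft x) t (Set.mem_Ioi.mpr ht)
  have htend : Filter.Tendsto u Filter.atTop (nhdsWithin t (Set.Ioi 0)) :=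
    tendsto_nhdsWithin_of_tendsto_nhds_of_eventually_within u hu_tendsto
      (Filter.Eventually.of_forall (fun n => (hu_mem n).1))
  have hT := (hcw.tendsto).comp htend
  exact le_of_tendsto hT
    (Filter.Eventually.of_forall fun n => h (u n) (hu_mem n).1 (hu_mem n).2)

lemma le_op_of_forall_gt {t x y : ℝ≥0∞} (ht : 0 < t) (ht' : t < ⊤)
    (h : ∀ s, t < s → s < ⊤ → y ≤ p.op s x) : y ≤ p.op t x := by
  obtain ⟨u, _, hu_mem, hu_tendsto⟩ := exists_seq_strictAnti_tendsto' ht'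
  have hcw : ContinuousWithinAt (fun s => p.op s x) (Set.Ioi 0) t :=
    (p.contLeft x) t (Set.mem_Ioi.mpr ht)
  have htend : Filter.Tendsto u Filter.atTop (nhdsWithin t (Set.Ioi 0)) :=
    tendsto_nhdsWithin_of_tendsto_nhds_of_eventually_within u hu_tendsto
      (Filter.Eventually.of_forall (fun n => lt_trans ht (hu_mem n).1))
  have hT := (hcw.tendsto).comp htend
  exact ge_of_tendsto hT
    (Filter.Eventually.of_forall fun n => h (u n) (hu_mem n).1 (hu_mem n).2)

lemma le_op_top (t : ℝ≥0∞) : t ≤ p.op ⊤ t :=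
  calc t = p.op p.one t := (p.one_op t).symm
    _ ≤ p.op ⊤ t := p.monoLeft t le_top

lemma ofin_zero : OdotFinite p 0 := by
  apply le_antisymm _ (zero_le)
  have h1 : p.op 1 0 = 0 := p.op_zero 1
  calc (⨅ s ∈ Set.Ioi (0:ℝ≥0∞), p.op s 0) ≤ p.op 1 0 :=
        biInf_le _ (Set.mem_Ioi.mpr zero_lt_one)
    _ = 0 := h1

lemma ofin_mono {x y : ℝ≥0∞} (h : x ≤ y) (hy : OdotFinite p y) : OdotFinite p x := by
  apply le_antisymm _ (zero_le)
  calc (⨅ s ∈ Set.Ioi (0:ℝ≥0∞), p.op s x) ≤ ⨅ s ∈ Set.Ioi (0:ℝ≥0∞), p.op s y :=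
        iInf₂_mono fun s _ => p.monoRight s h
    _ = 0 := hy

lemma ofin_max {x y : ℝ≥0∞} (hx : OdotFinite p x) (hy : OdotFinite p y) :
    OdotFinite p (max x y) := by
  rcases le_total x y with h | h
  · rw [max_eq_right h]; exact hy
  · rw [max_eq_left h]; exact hx

end PM

/-! ### Maxitive measure basics -/

variable {ν τ : Set E → ℝ≥0∞}

lemma maxitive_mono (h : Maxitive ν) {A B : Set E} (hA : MeasurableSet A)
    (hB : MeasurableSet B) (hAB : A ⊆ B) : ν A ≤ ν B := by
  have h2 := h.2 A B hA hB
  rw [Set.union_eq_self_of_subset_left hAB] at h2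
  rw [h2]
  exact le_max_left _ _

lemma accumulate_measurable {f : ℕ → Set E} (hf : ∀ n, MeasurableSet (f n)) (n : ℕ) :
    MeasurableSet (Set.accumulate f n) := by
  rw [Set.accumulate_def]
  exact MeasurableSet.biUnion (Set.to_countable _) fun k _ => hf k

lemma accumulate_succ (f : ℕ → Set E) (n : ℕ) :
    Set.accumulate f (n + 1) = Set.accumulate f n ∪ f (n + 1) := by
  ext x
  simp only [Set.mem_accumulate, Set.mem_union]
  constructor
  · rintro ⟨y, hy, hx⟩
    rcases Nat.le_succ_iff.mp hy with h | h
    · exact Or.inl ⟨y, h, hx⟩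
    · exact Or.inr (by rw [h] at hx; exact hx)
  · rintro (⟨y, hy, hx⟩ | hx)
    · exact ⟨y, hy.trans (Nat.le_succ n), hx⟩
    · exact ⟨n + 1, le_rfl, hx⟩

lemma smax_iUnion (h : SigmaMaxitive ν) (f : ℕ → Set E) (hf : ∀ n, MeasurableSet (f n)) :
    ν (⋃ n, f n) = ⨆ n, ν (f n) := by
  have h1 : ν (⋃ n, f n) = ⨆ n, ν (Set.accumulate f n) := by
    rw [← Set.iUnion_accumulate]
    exact h.2 _ (accumulate_measurable hf) Set.monotone_accumulate
  rw [h1]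
  apply le_antisymm
  · apply iSup_le
    intro n
    induction n with
    | zero =>
        have : Set.accumulate f 0 = f 0 := by
          rw [Set.accumulate_def]; simp
        rw [this]; exact le_iSup (fun n => ν (f n)) 0
    | succ n ih =>
        rw [accumulate_succ, h.1.2 _ _ (accumulate_measurable hf n) (hf (n+1))]
        exact max_le ih (le_iSup (fun n => ν (f n)) (n+1))
  · exact iSup_mono fun n =>
      maxitive_mono h.1 (hf n) (accumulate_measurable hf n) Set.subset_accumulate

lemma smax_iUnion' (h : SigmaMaxitive ν) {ι : Type*} [Countable ι] (f : ι → Set E)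
    (hf : ∀ i, MeasurableSet (f i)) : ν (⋃ i, f i) = ⨆ i, ν (f i) := by
  cases isEmpty_or_nonempty ι with
  | inl hempty =>
      simp [h.1.1]
  | inr hne =>
      obtain ⟨g, hg⟩ := exists_surjective_nat ι
      rw [← hg.iUnion_comp f, ← hg.iSup_comp (fun i => ν (f i))]
      exact smax_iUnion h _ (fun n => hf (g n))

lemma negligible_mono {N N' : Set E} (h : Negligible τ N) (h' : N' ⊆ N) : Negligible τ N' := by
  obtain ⟨B, h1, h2, h3⟩ := h
  exact ⟨B, h1, h'.trans h2, h3⟩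

lemma negligible_zero (hτm : Maxitive τ) {N : Set E} (hN : MeasurableSet N)
    (h : Negligible τ N) : τ N = 0 := by
  obtain ⟨B, hBm, hNB, hB0⟩ := h
  exact le_antisymm (hB0 ▸ maxitive_mono hτm hN hBm hNB) (zero_le)


/-! ### Hahn-type lower bound (Claim A) -/

lemma claimA (p : PseudoMul) (hτ : SigmaMaxitive τ) (hν : SigmaMaxitive ν)
    (habs : AbsCont ν τ) (hpr : SigmaPrincipal τ) {w : ℝ≥0∞} (hw0 : 0 < w) (hw1 : w < ⊤)
    {A : Set E} (hA : MeasurableSet A)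
    (hnull : ∀ S, MeasurableSet S → S ⊆ A →
      (∀ A', MeasurableSet A' → A' ⊆ S → ν A' ≤ p.op w (τ A')) → τ S = 0) :
    p.op w (τ A) ≤ ν A := by
  set K : Set (Set E) := {S | MeasurableSet S ∧ S ⊆ A ∧ p.op w (τ S) ≤ ν A} with hK
  have hK_ideal : SigmaIdeal K := by
    refine ⟨⟨∅, MeasurableSet.empty, Set.empty_subset _, ?_⟩, fun S hS => hS.1, ?_, ?_⟩
    · rw [hτ.1.1, p.op_zero]
      exact zero_le
    · intro f hf
      refine ⟨MeasurableSet.iUnion fun n => (hf n).1, Set.iUnion_subset fun n => (hf n).2.1, ?_⟩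
      rw [smax_iUnion hτ f (fun n => (hf n).1), PM.map_iSup p hw0 hw1]
      exact iSup_le fun n => (hf n).2.2
    · intro B S hB hS hBS
      exact ⟨hB, hBS.trans hS.2.1,
        le_trans (p.monoRight _ (maxitive_mono hτ.1 hB hS.1 hBS)) hS.2.2⟩
  obtain ⟨Lk, hLk, hLkmax⟩ := hpr K hK_ideal
  set R := A \ Lk with hR
  have hRmeas : MeasurableSet R := hA.diff hLk.1
  have hRA : R ⊆ A := Set.diff_subset
  have hRq : p.op w (τ R) ≤ ν A := by
    by_contra hcon
    push_neg at hcon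
    have hτR : τ R = 0 := by
      apply hnull R hRmeas hRA
      intro S hS hSR
      by_cases hcase : p.op w (τ S) ≤ ν A
      · have hSK : S ∈ K := ⟨hS, hSR.trans hRA, hcase⟩
        have hneg := hLkmax S hSK
        have hSdiff : S \ Lk = S := by
          ext x
          simp only [Set.mem_diff, and_iff_left_iff_imp]
          intro hx hxL
          exact (hSR hx).2 hxL
        rw [hSdiff] at hneg
        have hS0 : τ S = 0 := negligible_zero hτ.1 hS hneg
        rw [habs S hS hS0]
        exact zero_le
      · push_neg at hcase
        exact le_trans (maxitive_mono hν.1 hS hA (hSR.trans hRA)) (le_of_lt hcase)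
    rw [hτR, p.op_zero] at hcon
    exact (not_lt.mpr (zero_le)) hcon
  have hAsplit : A = Lk ∪ R := by
    rw [hR, Set.union_diff_cancel hLk.2.1]
  calc p.op w (τ A) = p.op w (max (τ Lk) (τ R)) := by
        rw [hAsplit, hτ.1.2 Lk R hLk.1 hRmeas]
    _ = max (p.op w (τ Lk)) (p.op w (τ R)) := PM.map_max p
    _ ≤ ν A := max_le hLk.2.2 hRq


/-! ### Sufficiency -/

theorem rn_suff (p : PseudoMul) (hτ : SigmaMaxitive τ) (hfin : SigmaOdotFinite p τ)
    (hpr : SigmaPrincipal τ) : RNProperty p τ := by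
  intro ν hν hνo
  have habs : AbsCont ν τ := by
    intro B hB h0
    have h1 := hνo B hB
    rw [h0, p.op_zero] at h1
    exact le_antisymm h1 (zero_le)
  -- the ideals
  set Iq : ℚ → Set (Set E) := fun q =>
    {S | MeasurableSet S ∧ ∀ A, MeasurableSet A → A ⊆ S → ν A ≤ p.op (e q) (τ A)} with hIq_def
  have hIq_ideal : ∀ q, SigmaIdeal (Iq q) := by
    intro q
    refine ⟨⟨∅, MeasurableSet.empty, ?_⟩, fun S hS => hS.1, ?_, ?_⟩
    · intro A hA hsub
      rw [Set.subset_empty_iff.mp hsub, hν.1.1]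
      exact zero_le
    · intro f hf
      refine ⟨MeasurableSet.iUnion fun n => (hf n).1, ?_⟩
      intro A hA hsub
      have hAeq : A = ⋃ n, A ∩ f n := by
        rw [← Set.inter_iUnion]
        exact (Set.inter_eq_self_of_subset_left hsub).symm
      have h2 : ν A = ⨆ n, ν (A ∩ f n) := by
        conv_lhs => rw [hAeq]
        exact smax_iUnion hν _ (fun n => hA.inter (hf n).1)
      rw [h2]
      apply iSup_le
      intro n
      calc ν (A ∩ f n) ≤ p.op (e q) (τ (A ∩ f n)) :=
            (hf n).2 (A ∩ f n) (hA.inter (hf n).1) Set.inter_subset_right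
        _ ≤ p.op (e q) (τ A) :=
            p.monoRight _ (maxitive_mono hτ.1 (hA.inter (hf n).1) hA Set.inter_subset_left)
    · intro B S hB hS hBS
      exact ⟨hB, fun A hA hsub => hS.2 A hA (hsub.trans hBS)⟩
  have hIq_mono : ∀ {q q' : ℚ}, q ≤ q' → Iq q ⊆ Iq q' := by
    intro q q' hqq S hS
    exact ⟨hS.1, fun A hA hsub =>
      le_trans (hS.2 A hA hsub) (p.monoLeft _ (e_mono hqq))⟩
  choose L₀ hL₀ using fun q => hpr (Iq q) (hIq_ideal q)
  set L : ℚ → Set E := fun q => ⋃ q' ∈ {r : ℚ | r ≤ q}, L₀ q' with hL_def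
  have hLmem : ∀ q, L q ∈ Iq q := by
    intro q
    have hcov : L q = ⋃ r : {r : ℚ // r ≤ q}, L₀ r.1 := by
      rw [hL_def]
      exact Set.biUnion_eq_iUnion _ _
    rw [hcov]
    have : Nonempty {r : ℚ // r ≤ q} := ⟨⟨q, le_rfl⟩⟩
    obtain ⟨g, hg⟩ := exists_surjective_nat {r : ℚ // r ≤ q}
    rw [← hg.iUnion_comp (fun r => L₀ r.1)]
    exact (hIq_ideal q).2.2.1 _ (fun n => hIq_mono (g n).2 (hL₀ (g n).1).1)
  have hLmeas : ∀ q, MeasurableSet (L q) := fun q => (hLmem q).1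
  have hLmono : ∀ {q q' : ℚ}, q ≤ q' → L q ⊆ L q' := by
    intro q q' hqq
    exact Set.biUnion_subset_biUnion_left (fun r (hr : r ≤ q) => hr.trans hqq)
  have hLmax : ∀ q S, S ∈ Iq q → Negligible τ (S \ L q) := by
    intro q S hS
    apply negligible_mono ((hL₀ q).2 S hS)
    apply Set.diff_subset_diff_right
    intro x hx
    exact Set.mem_biUnion (le_refl q) hx
  -- the density
  set c : E → ℝ≥0∞ := fun x => ⨅ q ∈ {r : ℚ | x ∈ L r}, e q with hc_def
  have hc_le : ∀ x q, x ∈ L q → c x ≤ e q := by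
    intro x q h
    exact biInf_le _ h
  have hc_mem : ∀ x q, c x < e q → x ∈ L q := by
    intro x q h
    rw [hc_def] at h
    simp only [iInf_lt_iff] at h
    obtain ⟨q', hq', hlt⟩ := h
    have hq'q : q' ≤ q := by
      by_contra hcon
      push_neg at hcon
      exact absurd (e_mono hcon.le) (not_le.mpr hlt)
    exact hLmono hq'q hq'
  have hc_level : ∀ t : ℝ≥0∞, {x | c x ≤ t} = ⋂ q ∈ {r : ℚ | t < e r}, L q := by
    intro t
    ext x
    simp only [Set.mem_setOf_eq, Set.mem_iInter]
    constructor
    · intro h q hq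
      exact hc_mem x q (lt_of_le_of_lt h hq)
    · intro h
      by_contra hcon
      push_neg at hcon
      obtain ⟨q, hq1, hq2⟩ := exists_rat_btwn hcon
      exact absurd (hc_le x q (h q hq1)) (not_le.mpr hq2)
  have hc_meas_le : ∀ t : ℝ≥0∞, MeasurableSet {x | c x ≤ t} := by
    intro t
    rw [hc_level t]
    exact MeasurableSet.biInter (Set.to_countable _) fun q _ => hLmeas q
  have hc_pre : Premeasurable c := by
    intro t
    have : {x | t < c x} = {x | c x ≤ t}ᶜ := by
      ext x
      simp [not_le]
    rw [this]
    exact (hc_meas_le t).compl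
  refine ⟨c, hc_pre, ?_⟩
  intro B hB
  -- the (≥) direction : iInt ≤ ν B
  have hge : iInt p τ c B ≤ ν B := by
    apply iSup₂_le
    intro t ht
    rcases eq_or_lt_of_le (zero_le : 0 ≤ t) with h0 | hpos
    · rw [← h0, p.zero_op]
      exact zero_le
    set A := B ∩ {x | t < c x} with hA_def
    have hAmeas : MeasurableSet A := hB.inter (hc_pre t)
    have key : ∀ s, 0 < s → s < t → p.op s (τ A) ≤ ν B := by
      intro s hs hst
      obtain ⟨q, hq1, hq2⟩ := exists_rat_btwn hst
      have hnull : ∀ S, MeasurableSet S → S ⊆ A →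
          (∀ A', MeasurableSet A' → A' ⊆ S → ν A' ≤ p.op (e q) (τ A')) → τ S = 0 := by
        intro S hS hSA hSin
        have hSIq : S ∈ Iq q := ⟨hS, hSin⟩
        have hneg := hLmax q S hSIq
        have hSdiff : S \ L q = S := by
          ext x
          simp only [Set.mem_diff, and_iff_left_iff_imp]
          intro hx hxL
          have h1 : c x ≤ e q := hc_le x q hxL
          have h2 : t < c x := (hSA hx).2
          exact absurd h2 (not_lt.mpr (h1.trans hq2.le))
        rw [hSdiff] at hneg
        exact negligible_zero hτ.1 hS hneg
      have hclaim := claimA p hτ hν habs hpr (lt_trans hs hq1) (e_lt_top q) hAmeas hnull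
      calc p.op s (τ A) ≤ p.op (e q) (τ A) := p.monoLeft _ hq1.le
        _ ≤ ν A := hclaim
        _ ≤ ν B := maxitive_mono hν.1 hAmeas hB Set.inter_subset_left
    exact PM.op_le_of_forall_lt p hpos key
  -- the (≤) direction : ν B ≤ iInt
  -- monotone σ-⊙-finite cover
  obtain ⟨D0, hD0meas, hD0cover, hD0fin⟩ := hfin
  set D : ℕ → Set E := fun n => Set.accumulate D0 n with hD_def
  have hDmeas : ∀ n, MeasurableSet (D n) := accumulate_measurable hD0meas
  have hDcover : ⋃ n, D n = Set.univ := by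
    rw [hD_def, Set.iUnion_accumulate, hD0cover]
  have hDfin : ∀ n, OdotFinite p (τ (D n)) := by
    intro n
    induction n with
    | zero =>
        have h0 : D 0 = D0 0 := by
          rw [hD_def]
          ext x
          simp [Set.mem_accumulate, Nat.le_zero]
        rw [h0]
        exact hD0fin 0
    | succ n ih =>
        have h0 : D (n+1) = D n ∪ D0 (n+1) := accumulate_succ D0 n
        rw [h0, hτ.1.2 _ _ (hDmeas n) (hD0meas (n+1))]
        exact PM.ofin_max p ih (hD0fin (n+1))
  -- split of B
  have hctop_meas : MeasurableSet {x | c x = ⊤} := by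
    have h0 : {x | c x = ⊤} = ⋂ n : ℕ, {x | (n : ℝ≥0∞) < c x} := by
      ext x
      simp only [Set.mem_setOf_eq, Set.mem_iInter]
      constructor
      · intro h n
        rw [h]
        exact ENNReal.natCast_lt_top n
      · intro h
        by_contra hcon
        obtain ⟨n, hn⟩ := ENNReal.exists_nat_gt hcon
        exact absurd (h n) (not_lt.mpr hn.le)
    rw [h0]
    exact MeasurableSet.iInter fun n => hc_pre _
  have hczero_meas : MeasurableSet {x | c x = 0} := by
    have h0 : {x | c x = 0} = {x | c x ≤ 0} := by
      ext x
      simp [le_zero_iff]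
    rw [h0]
    exact hc_meas_le 0
  have hcmid_meas : MeasurableSet {x | 0 < c x ∧ c x < ⊤} := by
    have h0 : {x | 0 < c x ∧ c x < ⊤} = {x | (0:ℝ≥0∞) < c x} ∩ {x | c x = ⊤}ᶜ := by
      ext x
      simp only [Set.mem_setOf_eq, Set.mem_inter_iff, Set.mem_compl_iff, lt_top_iff_ne_top]
    rw [h0]
    exact (hc_pre 0).inter hctop_meas.compl
  set X1 := B ∩ {x | c x = ⊤} with hX1_def
  set X2 := B ∩ {x | c x = 0} with hX2_def
  set X3 := B ∩ {x | 0 < c x ∧ c x < ⊤} with hX3_def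
  have hX1meas : MeasurableSet X1 := hB.inter hctop_meas
  have hX2meas : MeasurableSet X2 := hB.inter hczero_meas
  have hX3meas : MeasurableSet X3 := hB.inter hcmid_meas
  have h_top : ν X1 ≤ iInt p τ c B := by
    have h1 : ν X1 ≤ p.op ⊤ (τ X1) := hνo X1 hX1meas
    refine le_trans h1 (PM.op_le_of_forall_lt p (lt_of_lt_of_le zero_lt_one le_top) ?_)
    intro s hs hstop
    have hsub : X1 ⊆ B ∩ {x | s < c x} := by
      intro x hx
      exact ⟨hx.1, by
        have := hx.2
        simp only [Set.mem_setOf_eq] at this ⊢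
        rw [this]
        exact hstop⟩
    calc p.op s (τ X1) ≤ p.op s (τ (B ∩ {x | s < c x})) :=
          p.monoRight _ (maxitive_mono hτ.1 hX1meas (hB.inter (hc_pre s)) hsub)
      _ ≤ iInt p τ c B := le_iSup₂_of_le s hstop le_rfl
  have h_zero : ν X2 = 0 := by
    have hX2eq : X2 = ⋃ n, X2 ∩ D n := by
      rw [← Set.inter_iUnion, hDcover, Set.inter_univ]
    have h2 : ν X2 = ⨆ n, ν (X2 ∩ D n) := by
      conv_lhs => rw [hX2eq]
      exact smax_iUnion hν _ (fun n => hX2meas.inter (hDmeas n))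
    rw [h2]
    apply le_antisymm _ (zero_le)
    apply iSup_le
    intro n
    have hsubL : ∀ q : ℚ, 0 < e q → X2 ∩ D n ⊆ L q := by
      intro q hq x hx
      apply hc_mem x q
      have h3 : c x = 0 := hx.1.2
      rw [h3]
      exact hq
    have hb : ∀ s, s ∈ Set.Ioi (0:ℝ≥0∞) → ν (X2 ∩ D n) ≤ p.op s (τ (D n)) := by
      intro s hs
      obtain ⟨q, hq1, hq2⟩ := exists_rat_btwn hs
      calc ν (X2 ∩ D n) ≤ p.op (e q) (τ (X2 ∩ D n)) :=
            (hLmem q).2 _ (hX2meas.inter (hDmeas n)) (hsubL q hq1)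
        _ ≤ p.op (e q) (τ (D n)) := p.monoRight _
            (maxitive_mono hτ.1 (hX2meas.inter (hDmeas n)) (hDmeas n) Set.inter_subset_right)
        _ ≤ p.op s (τ (D n)) := p.monoLeft _ hq2.le
    have h4 : ν (X2 ∩ D n) ≤ ⨅ s ∈ Set.Ioi (0:ℝ≥0∞), p.op s (τ (D n)) := le_iInf₂ hb
    have h5 : (⨅ s ∈ Set.Ioi (0:ℝ≥0∞), p.op s (τ (D n))) = 0 := hDfin n
    rw [h5] at h4
    exact h4
  have hmeas_ge : ∀ t : ℝ≥0∞, MeasurableSet {x | t ≤ c x} := by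
    intro t
    have h0 : {x | t ≤ c x} = ⋂ q ∈ {r : ℚ | e r < t}, {x | e q < c x} := by
      ext x
      simp only [Set.mem_setOf_eq, Set.mem_iInter]
      constructor
      · intro h q hq
        exact lt_of_lt_of_le hq h
      · intro h
        by_contra hcon
        push_neg at hcon
        obtain ⟨q, hq1, hq2⟩ := exists_rat_btwn hcon
        exact absurd (h q hq2) (not_lt.mpr hq1.le)
    rw [h0]
    exact MeasurableSet.biInter (Set.to_countable _) fun q _ => hc_pre _
  have hmeas_lt' : ∀ t : ℝ≥0∞, MeasurableSet {x | c x < t} := by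
    intro t
    have h0 : {x | c x < t} = {x | t ≤ c x}ᶜ := by
      ext x
      simp [not_le]
    rw [h0]
    exact (hmeas_ge t).compl
  have hmeas_ab : ∀ a t : ℝ≥0∞, MeasurableSet {x | a < c x ∧ c x ≤ t} := by
    intro a t
    rw [Set.setOf_and]
    exact (hc_pre a).inter (hc_meas_le t)
  have hmeas_ab' : ∀ a t : ℝ≥0∞, MeasurableSet {x | a < c x ∧ c x < t} := by
    intro a t
    rw [Set.setOf_and]
    exact (hc_pre a).inter (hmeas_lt' t)
  have hmeas_gb : ∀ a t : ℝ≥0∞, MeasurableSet {x | a ≤ c x ∧ c x ≤ t} := by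
    intro a t
    rw [Set.setOf_and]
    exact (hmeas_ge a).inter (hc_meas_le t)
  have h_mid : ∀ n, ν (X3 ∩ D n) ≤ iInt p τ c B := by
    intro n
    set W := X3 ∩ D n with hW_def
    have hWmeas : MeasurableSet W := hX3meas.inter (hDmeas n)
    have hWB : W ⊆ B := fun x hx => hx.1.1
    have hWD : W ⊆ D n := Set.inter_subset_right
    by_contra hcon
    push_neg at hcon
    obtain ⟨γ, hγ1, hγ2⟩ := exists_between hcon
    suffices hsuff : γ ≤ iInt p τ c B by exact absurd hγ1 (not_lt.mpr hsuff)
    -- the critical threshold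
    set ts := sSup {t : ℝ≥0∞ | ν (W ∩ {x | c x ≤ t}) ≤ γ} with hts_def
    have hφmono : ∀ {t t' : ℝ≥0∞}, t ≤ t' →
        ν (W ∩ {x | c x ≤ t}) ≤ ν (W ∩ {x | c x ≤ t'}) := by
      intro t t' htt
      exact maxitive_mono hν.1 (hWmeas.inter (hc_meas_le t)) (hWmeas.inter (hc_meas_le t'))
        (Set.inter_subset_inter_right _ (fun x hx => le_trans hx htt))
    have f1 : ∀ t, t < ts → ν (W ∩ {x | c x ≤ t}) ≤ γ := by
      intro t ht
      obtain ⟨t', ht'mem, htt'⟩ := lt_sSup_iff.mp ht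
      exact le_trans (hφmono htt'.le) ht'mem
    have f2 : ∀ t, ts < t → γ < ν (W ∩ {x | c x ≤ t}) := by
      intro t ht
      by_contra h
      push_neg at h
      have hmem : t ∈ {t : ℝ≥0∞ | ν (W ∩ {x | c x ≤ t}) ≤ γ} := h
      have h2 := le_sSup hmem
      rw [← hts_def] at h2
      exact absurd h2 (not_le.mpr ht)
    have hsliceL : ∀ (q' : ℚ) (t : ℝ≥0∞) (S : Set E), MeasurableSet S →
        S ⊆ {x | c x ≤ t} → t < e q' → ν S ≤ p.op (e q') (τ S) := by
      intro q' t S hS hsub ht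
      exact (hLmem q').2 S hS (fun x hx => hc_mem x q' (lt_of_le_of_lt (hsub hx) ht))
    have hts_top : ts < ⊤ := by
      have hWeq : W = ⋃ q : ℚ, W ∩ {x | c x ≤ e q} := by
        ext x
        constructor
        · intro hx
          obtain ⟨q, hq1, _⟩ := exists_rat_btwn hx.1.2.2
          exact Set.mem_iUnion.mpr ⟨q, hx, hq1.le⟩
        · intro hx
          obtain ⟨q, hq⟩ := Set.mem_iUnion.mp hx
          exact hq.1
      have h4 : ν W = ⨆ q : ℚ, ν (W ∩ {x | c x ≤ e q}) := by
        conv_lhs => rw [hWeq]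
        exact smax_iUnion' hν _ (fun q => hWmeas.inter (hc_meas_le _))
      rw [h4] at hγ2
      obtain ⟨q₁, hq₁⟩ := lt_iSup_iff.mp hγ2
      have h5 : ts ≤ e q₁ := by
        apply sSup_le
        intro t ht
        by_contra hcon2
        push_neg at hcon2
        exact absurd (le_trans (hφmono hcon2.le) ht) (not_le.mpr hq₁)
      exact lt_of_le_of_lt h5 (e_lt_top q₁)
    rcases eq_or_lt_of_le (zero_le : 0 ≤ ts) with hts0 | htspos
    · -- case ts = 0
      have hγ0 : γ ≤ ⨅ s ∈ Set.Ioi (0:ℝ≥0∞), p.op s (τ (D n)) := by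
        apply le_iInf₂
        intro s hs
        obtain ⟨q', hq'1, hq'2⟩ := exists_rat_btwn hs
        obtain ⟨q, hq1, hq2⟩ := exists_rat_btwn hq'1
        have h6 : γ < ν (W ∩ {x | c x ≤ e q}) := f2 _ (by rw [← hts0]; exact hq1)
        have h7 : ν (W ∩ {x | c x ≤ e q}) ≤ p.op (e q') (τ (W ∩ {x | c x ≤ e q})) :=
          hsliceL q' (e q) _ (hWmeas.inter (hc_meas_le _)) Set.inter_subset_right hq2
        calc γ ≤ p.op (e q') (τ (W ∩ {x | c x ≤ e q})) := le_of_lt (lt_of_lt_of_le h6 h7)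
          _ ≤ p.op (e q') (τ (D n)) := p.monoRight _ (maxitive_mono hτ.1
              (hWmeas.inter (hc_meas_le _)) (hDmeas n)
              (fun x hx => hWD hx.1))
          _ ≤ p.op s (τ (D n)) := p.monoLeft _ hq'2.le
      have h5 : (⨅ s ∈ Set.Ioi (0:ℝ≥0∞), p.op s (τ (D n))) = 0 := hDfin n
      rw [h5] at hγ0
      exact le_trans hγ0 (zero_le)
    · -- case ts > 0
      have hJlb : ∀ a, 0 < a → a < ts → p.op a (τ (W ∩ {x | a < c x})) ≤ iInt p τ c B := by
        intro a ha1 ha2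
        calc p.op a (τ (W ∩ {x | a < c x})) ≤ p.op a (τ (B ∩ {x | a < c x})) :=
              p.monoRight _ (maxitive_mono hτ.1 (hWmeas.inter (hc_pre a))
                (hB.inter (hc_pre a)) (Set.inter_subset_inter_left _ hWB))
          _ ≤ iInt p τ c B := le_iSup₂_of_le a (lt_trans ha2 hts_top) le_rfl
      by_cases hdich : ∃ a, 0 < a ∧ a < ts ∧ ν (W ∩ {x | a < c x ∧ c x < ts}) ≤ γ
      · -- case (i)
        obtain ⟨a₀, ha₀1, ha₀2, ha₀3⟩ := hdich
        have key : ∀ s, ts < s → s < ⊤ → γ ≤ p.op s (τ (W ∩ {x | ts ≤ c x})) := by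
          intro s hs1 hs2
          obtain ⟨q', hq'1, hq'2⟩ := exists_rat_btwn hs1
          obtain ⟨q, hq1, hq2⟩ := exists_rat_btwn hq'1
          have h6 : γ < ν (W ∩ {x | c x ≤ e q}) := f2 _ hq1
          have hsplit3 : W ∩ {x | c x ≤ e q} =
              (W ∩ {x | c x ≤ a₀}) ∪ ((W ∩ {x | a₀ < c x ∧ c x < ts}) ∪
                (W ∩ {x | ts ≤ c x ∧ c x ≤ e q})) := by
            ext x
            simp only [Set.mem_union, Set.mem_inter_iff, Set.mem_setOf_eq]
            constructor
            · rintro ⟨hxW, hxc⟩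
              rcases le_or_gt (c x) a₀ with h | h
              · exact Or.inl ⟨hxW, h⟩
              · rcases lt_or_ge (c x) ts with h' | h'
                · exact Or.inr (Or.inl ⟨hxW, h, h'⟩)
                · exact Or.inr (Or.inr ⟨hxW, h', hxc⟩)
            · rintro (⟨hxW, h⟩ | ⟨hxW, h⟩ | ⟨hxW, h⟩)
              · exact ⟨hxW, le_trans h (le_of_lt (lt_trans ha₀2 hq1))⟩
              · exact ⟨hxW, le_of_lt (lt_trans h.2 hq1)⟩
              · exact ⟨hxW, h.2⟩
          rw [hsplit3] at h6
          rw [hν.1.2 _ _ (hWmeas.inter (hc_meas_le a₀))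
              ((hWmeas.inter (hmeas_ab' a₀ ts)).union (hWmeas.inter (hmeas_gb ts (e q)))),
            hν.1.2 _ _ (hWmeas.inter (hmeas_ab' a₀ ts)) (hWmeas.inter (hmeas_gb ts (e q)))] at h6
          have hth : γ < ν (W ∩ {x | ts ≤ c x ∧ c x ≤ e q}) := by
            by_contra hc3
            push_neg at hc3
            have hmax := max_le (f1 a₀ ha₀2) (max_le ha₀3 hc3)
            exact absurd h6 (not_lt.mpr hmax)
          have h7 : ν (W ∩ {x | ts ≤ c x ∧ c x ≤ e q}) ≤
              p.op (e q') (τ (W ∩ {x | ts ≤ c x ∧ c x ≤ e q})) :=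
            hsliceL q' (e q) _ (hWmeas.inter (hmeas_gb ts (e q)))
              (fun x hx => hx.2.2) hq2
          calc γ ≤ p.op (e q') (τ (W ∩ {x | ts ≤ c x ∧ c x ≤ e q})) :=
                le_of_lt (lt_of_lt_of_le hth h7)
            _ ≤ p.op (e q') (τ (W ∩ {x | ts ≤ c x})) := p.monoRight _
                (maxitive_mono hτ.1 (hWmeas.inter (hmeas_gb ts (e q)))
                  (hWmeas.inter (hmeas_ge ts)) (fun x hx => ⟨hx.1, hx.2.1⟩))
            _ ≤ p.op s (τ (W ∩ {x | ts ≤ c x})) := p.monoLeft _ hq'2.le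
        have h8 : γ ≤ p.op ts (τ (W ∩ {x | ts ≤ c x})) :=
          PM.le_op_of_forall_gt p htspos hts_top key
        have h9 : p.op ts (τ (W ∩ {x | ts ≤ c x})) ≤ iInt p τ c B := by
          apply PM.op_le_of_forall_lt p htspos
          intro a ha1 ha2
          calc p.op a (τ (W ∩ {x | ts ≤ c x})) ≤ p.op a (τ (W ∩ {x | a < c x})) :=
                p.monoRight _ (maxitive_mono hτ.1 (hWmeas.inter (hmeas_ge ts))
                  (hWmeas.inter (hc_pre a))
                  (Set.inter_subset_inter_right _ (fun x hx => lt_of_lt_of_le ha2 hx)))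
            _ ≤ iInt p τ c B := hJlb a ha1 ha2
        exact le_trans h8 h9
      · -- case (ii)
        push_neg at hdich
        have key1 : ∀ a, 0 < a → a < ts → γ < p.op ts (τ (W ∩ {x | a < c x})) := by
          intro a ha1 ha2
          have h6 := hdich a ha1 ha2
          have hUeq : W ∩ {x | a < c x ∧ c x < ts} =
              ⋃ q : {q : ℚ // e q < ts}, (W ∩ {x | a < c x ∧ c x ≤ e q.1}) := by
            ext x
            simp only [Set.mem_iUnion, Set.mem_inter_iff, Set.mem_setOf_eq]
            constructor
            · rintro ⟨hxW, hxa, hxts⟩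
              obtain ⟨q, hq1, hq2⟩ := exists_rat_btwn hxts
              exact ⟨⟨q, hq2⟩, hxW, hxa, hq1.le⟩
            · rintro ⟨q, hxW, hxa, hxq⟩
              exact ⟨hxW, hxa, lt_of_le_of_lt hxq q.2⟩
          rw [hUeq] at h6
          rw [smax_iUnion' hν
            (fun q : {q : ℚ // e q < ts} => W ∩ {x | a < c x ∧ c x ≤ e q.1})
            (fun q => hWmeas.inter (hmeas_ab a (e q.1)))] at h6
          obtain ⟨q, hq⟩ := lt_iSup_iff.mp h6
          obtain ⟨q'', hq''1, hq''2⟩ := exists_rat_btwn q.2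
          have h7 : ν (W ∩ {x | a < c x ∧ c x ≤ e q.1}) ≤
              p.op (e q'') (τ (W ∩ {x | a < c x ∧ c x ≤ e q.1})) :=
            hsliceL q'' (e q.1) _ (hWmeas.inter (hmeas_ab a (e q.1)))
              (fun x hx => hx.2.2) hq''1
          calc γ < ν (W ∩ {x | a < c x ∧ c x ≤ e q.1}) := hq
            _ ≤ p.op (e q'') (τ (W ∩ {x | a < c x ∧ c x ≤ e q.1})) := h7
            _ ≤ p.op (e q'') (τ (W ∩ {x | a < c x})) := p.monoRight _
                (maxitive_mono hτ.1 (hWmeas.inter (hmeas_ab a (e q.1)))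
                  (hWmeas.inter (hc_pre a))
                  (Set.inter_subset_inter_right _ (fun x hx => hx.1)))
            _ ≤ p.op ts (τ (W ∩ {x | a < c x})) := p.monoLeft _ hq''2.le
        obtain ⟨u, humono, humem, hutend⟩ := exists_seq_strictMono_tendsto' htspos
        set Y : ℕ → ℝ≥0∞ := fun k => τ (W ∩ {x | u k < c x}) with hY_def
        have hYanti : Antitone Y := by
          intro k l hkl
          exact maxitive_mono hτ.1 (hWmeas.inter (hc_pre _)) (hWmeas.inter (hc_pre _))
            (Set.inter_subset_inter_right _
              (fun x hx => lt_of_le_of_lt (humono.monotone hkl) hx))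
        set y := ⨅ k, Y k with hy_def
        have hYtend : Filter.Tendsto Y Filter.atTop (nhds y) := tendsto_atTop_iInf hYanti
        have hcont : ContinuousAt (fun z => p.op ts z) y := PM.contAt p htspos hts_top y
        have h10 : Filter.Tendsto (fun k => p.op ts (Y k)) Filter.atTop (nhds (p.op ts y)) :=
          (hcont.tendsto).comp hYtend
        have h11 : γ ≤ p.op ts y := ge_of_tendsto h10
          (Filter.Eventually.of_forall fun k => (key1 (u k) (humem k).1 (humem k).2).le)
        have h12 : p.op ts y ≤ iInt p τ c B := by
          apply PM.op_le_of_forall_lt p htspos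
          intro a ha1 ha2
          have hev : ∀ᶠ k in Filter.atTop, a < u k := hutend.eventually (eventually_gt_nhds ha2)
          obtain ⟨k, hk⟩ := hev.exists
          calc p.op a y ≤ p.op a (Y k) := p.monoRight _ (iInf_le _ k)
            _ ≤ p.op a (τ (W ∩ {x | a < c x})) := p.monoRight _
                (maxitive_mono hτ.1 (hWmeas.inter (hc_pre _)) (hWmeas.inter (hc_pre a))
                  (Set.inter_subset_inter_right _ (fun x hx => lt_trans hk hx)))
            _ ≤ iInt p τ c B := hJlb a ha1 ha2
        exact le_trans h11 h12
  have hle : ν B ≤ iInt p τ c B := by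
    have hsplit : B = X1 ∪ (X2 ∪ X3) := by
      ext x
      simp only [hX1_def, hX2_def, hX3_def, Set.mem_union, Set.mem_inter_iff, Set.mem_setOf_eq]
      constructor
      · intro hx
        rcases eq_or_ne (c x) ⊤ with h | h
        · exact Or.inl ⟨hx, h⟩
        · rcases eq_or_ne (c x) 0 with h0 | h0
          · exact Or.inr (Or.inl ⟨hx, h0⟩)
          · exact Or.inr (Or.inr ⟨hx, pos_iff_ne_zero.mpr h0, lt_top_iff_ne_top.mpr h⟩)
      · rintro (⟨hx, _⟩ | ⟨hx, _⟩ | ⟨hx, _⟩) <;> exact hx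
    have hνB : ν B = max (ν X1) (max (ν X2) (ν X3)) := by
      conv_lhs => rw [hsplit]
      rw [hν.1.2 _ _ hX1meas (hX2meas.union hX3meas), hν.1.2 _ _ hX2meas hX3meas]
    rw [hνB]
    have hX3eq : X3 = ⋃ n, X3 ∩ D n := by
      rw [← Set.inter_iUnion, hDcover, Set.inter_univ]
    have h3 : ν X3 = ⨆ n, ν (X3 ∩ D n) := by
      conv_lhs => rw [hX3eq]
      exact smax_iUnion hν _ (fun n => hX3meas.inter (hDmeas n))
    refine max_le h_top (max_le ?_ ?_)
    · rw [h_zero]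
      exact zero_le
    · rw [h3]
      exact iSup_le h_mid
  exact le_antisymm hle hge


/-! ### Necessity: countable chain condition -/

theorem ccc_of_rn (p : PseudoMul) (hτ : SigmaMaxitive τ) (hRN : RNProperty p τ)
    (fam : Set (Set E)) (hmeas : ∀ G ∈ fam, MeasurableSet G) (hpos : ∀ G ∈ fam, 0 < τ G)
    (hdisj : ∀ G ∈ fam, ∀ G' ∈ fam, G ≠ G' → G ∩ G' = ∅) : fam.Countable := by
  by_contra hunc
  set T : Set E → ℝ≥0∞ → Set (Set E) := fun B x => {G | G ∈ fam ∧ x < τ (B ∩ G)} with hT_def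
  set ν : Set E → ℝ≥0∞ := fun B => sSup {x | ¬ (T B x).Countable} with hν_def
  have hTcup : ∀ A B : Set E, MeasurableSet A → MeasurableSet B → ∀ x : ℝ≥0∞,
      T (A ∪ B) x = T A x ∪ T B x := by
    intro A B hA hB x
    ext G
    simp only [hT_def, Set.mem_setOf_eq, Set.mem_union]
    constructor
    · rintro ⟨hG, hx⟩
      rw [Set.union_inter_distrib_right, hτ.1.2 _ _ (hA.inter (hmeas G hG))
        (hB.inter (hmeas G hG)), lt_max_iff] at hx
      rcases hx with h | h
      · exact Or.inl ⟨hG, h⟩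
      · exact Or.inr ⟨hG, h⟩
    · rintro (⟨hG, hx⟩ | ⟨hG, hx⟩)
      · exact ⟨hG, lt_of_lt_of_le hx (maxitive_mono hτ.1 (hA.inter (hmeas G hG))
          ((hA.union hB).inter (hmeas G hG))
          (Set.inter_subset_inter_left _ Set.subset_union_left))⟩
      · exact ⟨hG, lt_of_lt_of_le hx (maxitive_mono hτ.1 (hB.inter (hmeas G hG))
          ((hA.union hB).inter (hmeas G hG))
          (Set.inter_subset_inter_left _ Set.subset_union_right))⟩
  have hTUnion : ∀ (f : ℕ → Set E), (∀ n, MeasurableSet (f n)) → Monotone f →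
      ∀ x : ℝ≥0∞, T (⋃ n, f n) x = ⋃ n, T (f n) x := by
    intro f hf hmono x
    ext G
    simp only [hT_def, Set.mem_setOf_eq, Set.mem_iUnion]
    constructor
    · rintro ⟨hG, hx⟩
      rw [Set.iUnion_inter, hτ.2 _ (fun n => (hf n).inter (hmeas G hG))
        (fun k l hkl => Set.inter_subset_inter_left _ (hmono hkl)), lt_iSup_iff] at hx
      obtain ⟨n, hn⟩ := hx
      exact ⟨n, hG, hn⟩
    · rintro ⟨n, hG, hx⟩
      exact ⟨hG, lt_of_lt_of_le hx (maxitive_mono hτ.1 ((hf n).inter (hmeas G hG))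
        ((MeasurableSet.iUnion hf).inter (hmeas G hG))
        (Set.inter_subset_inter_left _ (Set.subset_iUnion f n)))⟩
  have hνmax : SigmaMaxitive ν := by
    refine ⟨⟨?_, ?_⟩, ?_⟩
    · have h1 : ∀ x : ℝ≥0∞, T ∅ x = ∅ := by
        intro x
        ext G
        simp [hT_def, hτ.1.1]
      have h2 : {x : ℝ≥0∞ | ¬ (T ∅ x).Countable} = ∅ := by
        ext x
        simp [h1 x, Set.countable_empty]
      simp only [hν_def, h2, sSup_empty]
      rfl
    · intro A B hA hB
      have h2 : {x : ℝ≥0∞ | ¬ (T (A ∪ B) x).Countable} =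
          {x | ¬ (T A x).Countable} ∪ {x | ¬ (T B x).Countable} := by
        ext x
        simp only [Set.mem_setOf_eq, Set.mem_union, hTcup A B hA hB x, Set.countable_union]
        tauto
      simp only [hν_def, h2, sSup_union]
    · intro f hf hmono
      have h2 : {x : ℝ≥0∞ | ¬ (T (⋃ n, f n) x).Countable} =
          ⋃ n, {x | ¬ (T (f n) x).Countable} := by
        ext x
        simp only [Set.mem_setOf_eq, Set.mem_iUnion, hTUnion f hf hmono x]
        constructor
        · intro h
          by_contra hall
          push_neg at hall
          exact h (Set.countable_iUnion hall)
        · rintro ⟨n, hn⟩ hcon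
          exact hn (hcon.mono (Set.subset_iUnion (fun n => T (f n) x) n))
      simp only [hν_def, h2]
      apply le_antisymm
      · apply sSup_le
        intro x hx
        obtain ⟨n, hn⟩ := Set.mem_iUnion.mp hx
        exact le_iSup_of_le n (le_sSup hn)
      · exact iSup_le fun n => sSup_le_sSup
          (Set.subset_iUnion (fun n => {x : ℝ≥0∞ | ¬ (T (f n) x).Countable}) n)
  have hνo : OdotAbsCont p ν τ := by
    intro B hB
    apply sSup_le
    intro x hx
    have hne : (T B x).Nonempty := by
      rw [Set.nonempty_iff_ne_empty]
      intro h
      exact hx (h ▸ Set.countable_empty)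
    obtain ⟨G, hG, hxG⟩ := hne
    calc x ≤ τ (B ∩ G) := hxG.le
      _ ≤ τ B := maxitive_mono hτ.1 (hB.inter (hmeas G hG)) hB Set.inter_subset_left
      _ ≤ p.op ⊤ (τ B) := PM.le_op_top p _
  obtain ⟨c, hcpre, hcint⟩ := hRN ν hνmax hνo
  have hczero_meas : MeasurableSet {x | c x = 0} := by
    have h0 : {x | c x = 0} = {x | (0:ℝ≥0∞) < c x}ᶜ := by
      ext x
      simp [pos_iff_ne_zero]
    rw [h0]
    exact (hcpre 0).compl
  have hGzero : ∀ G ∈ fam, τ (G ∩ {x | c x = 0}) = τ G := by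
    intro G hG
    have hνG : ν G = 0 := by
      apply le_antisymm _ (zero_le)
      apply sSup_le
      intro x hx
      exfalso
      apply hx
      apply Set.Countable.mono _ (Set.countable_singleton G)
      intro G' hG'
      simp only [Set.mem_singleton_iff]
      by_contra hne
      have hd := hdisj G hG G' hG'.1 (fun h => hne h.symm)
      have := hG'.2
      rw [hd, hτ.1.1] at this
      exact absurd this (by simp)
    have hJG := hcint G (hmeas G hG)
    rw [hνG] at hJG
    have hpos' : ∀ t : ℝ≥0∞, 0 < t → t < ⊤ → τ (G ∩ {x | t < c x}) = 0 := by
      intro t ht0 ht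
      have hterm : p.op t (τ (G ∩ {x | t < c x})) = 0 := by
        apply le_antisymm _ (zero_le)
        calc p.op t (τ (G ∩ {x | t < c x})) ≤ iInt p τ c G := le_iSup₂_of_le t ht le_rfl
          _ = 0 := hJG.symm
      rcases p.eq_zero _ _ hterm with h | h
      · exact absurd h (ne_of_gt ht0)
      · exact h
    have hcup : G ∩ {x | 0 < c x} = ⋃ n : ℕ, G ∩ {x | ((n:ℝ≥0∞))⁻¹ < c x} := by
      ext x
      simp only [Set.mem_inter_iff, Set.mem_iUnion, Set.mem_setOf_eq]
      constructor
      · rintro ⟨hxG, hxc⟩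
        obtain ⟨n, hn⟩ := ENNReal.exists_inv_nat_lt (ne_of_gt hxc)
        exact ⟨n, hxG, hn⟩
      · rintro ⟨n, hxG, hn⟩
        exact ⟨hxG, lt_of_le_of_lt (zero_le) hn⟩
    have h0 : τ (G ∩ {x | 0 < c x}) = 0 := by
      rw [hcup, smax_iUnion hτ _ (fun n => (hmeas G hG).inter (hcpre _))]
      apply le_antisymm _ (zero_le)
      apply iSup_le
      intro n
      rcases Nat.eq_zero_or_pos n with h | h
      · subst h
        have hempty : G ∩ {x | ((0:ℕ):ℝ≥0∞)⁻¹ < c x} = ∅ := by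
          ext x
          simp only [Set.mem_inter_iff, Set.mem_setOf_eq, Set.mem_empty_iff_false,
            iff_false, not_and]
          intro _
          simp
        rw [hempty, hτ.1.1]
      · have h1 : (0:ℝ≥0∞) < ((n:ℝ≥0∞))⁻¹ := ENNReal.inv_pos.mpr (ENNReal.natCast_ne_top n)
        have h2 : ((n:ℝ≥0∞))⁻¹ < ⊤ := ENNReal.inv_lt_top.mpr (by exact_mod_cast h)
        exact le_of_eq (hpos' _ h1 h2)
    have hsplit : G = (G ∩ {x | c x = 0}) ∪ (G ∩ {x | 0 < c x}) := by
      ext x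
      simp only [Set.mem_union, Set.mem_inter_iff, Set.mem_setOf_eq]
      constructor
      · intro hx
        rcases eq_or_ne (c x) 0 with hc0 | hc0
        · exact Or.inl ⟨hx, hc0⟩
        · exact Or.inr ⟨hx, pos_iff_ne_zero.mpr hc0⟩
      · rintro (⟨hx, _⟩ | ⟨hx, _⟩) <;> exact hx
    have h3 : τ G = max (τ (G ∩ {x | c x = 0})) (τ (G ∩ {x | 0 < c x})) := by
      conv_lhs => rw [hsplit]
      exact hτ.1.2 _ _ ((hmeas G hG).inter hczero_meas) ((hmeas G hG).inter (hcpre 0))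
    rw [h0, max_eq_left (zero_le)] at h3
    exact h3.symm
  have hνB0 : ν {x | c x = 0} = 0 := by
    have hJ := hcint {x | c x = 0} hczero_meas
    have hempty : ∀ t : ℝ≥0∞, {x | c x = 0} ∩ {x | t < c x} = ∅ := by
      intro t
      ext x
      simp only [Set.mem_inter_iff, Set.mem_setOf_eq, Set.mem_empty_iff_false, iff_false,
        not_and]
      intro h hlt
      rw [h] at hlt
      exact absurd hlt (by simp)
    rw [hJ]
    apply le_antisymm _ (zero_le)
    apply iSup₂_le
    intro t _
    rw [hempty t, hτ.1.1, p.op_zero]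
  have hex : ∃ n : ℕ, ¬ Set.Countable {G | G ∈ fam ∧ ((n:ℝ≥0∞))⁻¹ < τ ({x | c x = 0} ∩ G)} := by
    by_contra hall
    push_neg at hall
    apply hunc
    have hcov : fam ⊆ ⋃ n : ℕ, {G | G ∈ fam ∧ ((n:ℝ≥0∞))⁻¹ < τ ({x | c x = 0} ∩ G)} := by
      intro G hG
      have hpos2 : 0 < τ ({x | c x = 0} ∩ G) := by
        rw [Set.inter_comm, hGzero G hG]
        exact hpos G hG
      obtain ⟨n, hn⟩ := ENNReal.exists_inv_nat_lt (ne_of_gt hpos2)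
      exact Set.mem_iUnion.mpr ⟨n, hG, hn⟩
    exact (Set.countable_iUnion hall).mono hcov
  obtain ⟨n, hn⟩ := hex
  have hle2 : ((n:ℝ≥0∞))⁻¹ ≤ ν {x | c x = 0} := by
    apply le_sSup
    exact hn
  rw [hνB0] at hle2
  have : ((n:ℝ≥0∞))⁻¹ = 0 := le_antisymm hle2 (zero_le)
  rw [ENNReal.inv_eq_zero] at this
  exact absurd this (ENNReal.natCast_ne_top n)


/-! ### Necessity: σ-principality from ccc -/

theorem principal_of_ccc (hτ : SigmaMaxitive τ)
    (hccc : ∀ fam : Set (Set E), (∀ G ∈ fam, MeasurableSet G) → (∀ G ∈ fam, 0 < τ G) →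
      (∀ G ∈ fam, ∀ G' ∈ fam, G ≠ G' → G ∩ G' = ∅) → fam.Countable) :
    SigmaPrincipal τ := by
  intro I hI
  set 𝒮 : Set (Set (Set E)) := {D | (∀ d ∈ D, d ∈ I ∧ 0 < τ d) ∧
    (∀ d ∈ D, ∀ d' ∈ D, d ≠ d' → d ∩ d' = ∅)} with h𝒮
  obtain ⟨M, hM⟩ := zorn_subset 𝒮 (by
    intro ch hch hchain
    refine ⟨⋃₀ ch, ⟨?_, ?_⟩, fun s hs => Set.subset_sUnion_of_mem hs⟩
    · rintro d ⟨D, hD, hdD⟩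
      exact (hch hD).1 d hdD
    · rintro d ⟨D, hD, hdD⟩ d' ⟨D', hD', hd'D'⟩ hne
      rcases hchain.total hD hD' with h | h
      · exact (hch hD').2 d (h hdD) d' hd'D' hne
      · exact (hch hD).2 d hdD d' (h hd'D') hne)
  have hMS : M ∈ 𝒮 := hM.1
  have hMctble : M.Countable :=
    hccc M (fun d hd => hI.2.1 d (hMS.1 d hd).1) (fun d hd => (hMS.1 d hd).2) hMS.2
  have hLI : ⋃₀ M ∈ I := by
    obtain ⟨S₀, hS₀⟩ := hI.1
    have hempty : ∅ ∈ I := hI.2.2.2 ∅ S₀ MeasurableSet.empty hS₀ (Set.empty_subset _)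
    rcases M.eq_empty_or_nonempty with h | h
    · rw [h, Set.sUnion_empty]
      exact hempty
    · obtain ⟨f, hf⟩ := hMctble.exists_eq_range h
      have h2 : ⋃₀ M = ⋃ n, f n := by rw [hf, Set.sUnion_range]
      rw [h2]
      apply hI.2.2.1
      intro n
      have : f n ∈ M := by rw [hf]; exact Set.mem_range_self n
      exact (hMS.1 _ this).1
  refine ⟨⋃₀ M, hLI, ?_⟩
  intro S hS
  have hSL_meas : MeasurableSet (S \ ⋃₀ M) := (hI.2.1 S hS).diff (hI.2.1 _ hLI)
  refine ⟨S \ ⋃₀ M, hSL_meas, subset_refl _, ?_⟩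
  by_contra hpos2
  have hτpos : 0 < τ (S \ ⋃₀ M) := pos_iff_ne_zero.mpr hpos2
  have hmem : S \ ⋃₀ M ∈ I := hI.2.2.2 _ S hSL_meas hS Set.diff_subset
  have hM'S : insert (S \ ⋃₀ M) M ∈ 𝒮 := by
    constructor
    · intro d hd
      rcases Set.mem_insert_iff.mp hd with h | h
      · rw [h]; exact ⟨hmem, hτpos⟩
      · exact hMS.1 d h
    · intro d hd d' hd' hne
      have hkey : ∀ d'' ∈ M, (S \ ⋃₀ M) ∩ d'' = ∅ := by
        intro d'' hd''
        ext x
        simp only [Set.mem_inter_iff, Set.mem_diff, Set.mem_empty_iff_false, iff_false, not_and]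
        rintro ⟨_, hxn⟩ hxd
        exact absurd ⟨d'', hd'', hxd⟩ hxn
      rcases Set.mem_insert_iff.mp hd with h | h <;> rcases Set.mem_insert_iff.mp hd' with h' | h'
      · exact absurd (h.trans h'.symm) hne
      · rw [h]; exact hkey d' h'
      · rw [h', Set.inter_comm]; exact hkey d h
      · exact hMS.2 d h d' h' hne
  have hsub := hM.2 hM'S (Set.subset_insert _ _)
  have hin : S \ ⋃₀ M ∈ M := hsub (Set.mem_insert _ _)
  have hne : (S \ ⋃₀ M).Nonempty := by
    rw [Set.nonempty_iff_ne_empty]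
    intro h
    rw [h, hτ.1.1] at hτpos
    exact lt_irrefl 0 hτpos
  obtain ⟨x, hx⟩ := hne
  exact hx.2 ⟨_, hin, hx⟩

/-! ### Necessity: σ-⊙-finiteness -/

theorem sigmaOdotFinite_of (p : PseudoMul) (hp : OdotFinite p p.one) (hτ : SigmaMaxitive τ)
    (hRN : RNProperty p τ) (hpr : SigmaPrincipal τ) : SigmaOdotFinite p τ := by
  set IF : Set (Set E) := {B | MeasurableSet B ∧ ∃ f : ℕ → Set E,
    (∀ n, MeasurableSet (f n) ∧ OdotFinite p (τ (f n))) ∧ B ⊆ ⋃ n, f n} with hIF_def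
  have hIF_ideal : SigmaIdeal IF := by
    refine ⟨⟨∅, MeasurableSet.empty, fun _ => ∅, fun n => ⟨MeasurableSet.empty, ?_⟩,
      Set.empty_subset _⟩, fun S hS => hS.1, ?_, ?_⟩
    · rw [hτ.1.1]
      exact PM.ofin_zero p
    · intro f hf
      choose g hg1 hg2 using fun n => (hf n).2
      refine ⟨MeasurableSet.iUnion fun n => (hf n).1,
        fun m => g (Nat.unpair m).1 (Nat.unpair m).2, fun m => hg1 _ _, ?_⟩
      intro x hx
      obtain ⟨n, hn⟩ := Set.mem_iUnion.mp hx
      obtain ⟨k, hk⟩ := Set.mem_iUnion.mp (hg2 n hn)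
      apply Set.mem_iUnion.mpr
      refine ⟨Nat.pair n k, ?_⟩
      rw [Nat.unpair_pair]
      exact hk
    · intro B S hB hS hBS
      obtain ⟨_, f, hf1, hf2⟩ := hS
      exact ⟨hB, f, hf1, hBS.trans hf2⟩
  obtain ⟨Lf, hLf, hLfmax⟩ := hpr IF hIF_ideal
  obtain ⟨hLfmeas, Bc, hBc, hBcsub⟩ := hLf
  set R := (⋃ n, Bc n)ᶜ with hR_def
  have hRmeas : MeasurableSet R := (MeasurableSet.iUnion fun n => (hBc n).1).compl
  have hRnull : ∀ S, MeasurableSet S → S ⊆ R → OdotFinite p (τ S) → τ S = 0 := by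
    intro S hS hSR hfin
    have hSIF : S ∈ IF := ⟨hS, fun _ => S, fun n => ⟨hS, hfin⟩,
      Set.subset_iUnion (fun _ : ℕ => S) 0⟩
    have hneg := hLfmax S hSIF
    have hSdiff : S \ Lf = S := by
      ext x
      simp only [Set.mem_diff, and_iff_left_iff_imp]
      intro hx hxL
      exact (hSR hx) (hBcsub hxL)
    rw [hSdiff] at hneg
    exact negligible_zero hτ.1 hS hneg
  by_cases hτR : τ R = 0
  · refine ⟨fun n => Nat.casesOn n R Bc, ?_, ?_, ?_⟩
    · intro n
      cases n with
      | zero => exact hRmeas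
      | succ k => exact (hBc k).1
    · apply Set.eq_univ_of_forall
      intro x
      by_cases hx : x ∈ ⋃ n, Bc n
      · obtain ⟨k, hk⟩ := Set.mem_iUnion.mp hx
        exact Set.mem_iUnion.mpr ⟨k + 1, hk⟩
      · exact Set.mem_iUnion.mpr ⟨0, hx⟩
    · intro n
      cases n with
      | zero =>
          show OdotFinite p (τ R)
          rw [hτR]
          exact PM.ofin_zero p
      | succ k => exact (hBc k).2
  · exfalso
    have hτRpos : 0 < τ R := pos_iff_ne_zero.mpr hτR
    set ν : Set E → ℝ≥0∞ := fun B => if 0 < τ (B ∩ R) then p.one else 0 with hν_def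
    have hone_lt : ∀ x : ℝ≥0∞, ¬ OdotFinite p x → p.one < x := by
      intro x hx
      by_contra h
      push_neg at h
      exact hx (PM.ofin_mono p h hp)
    have hνmax : SigmaMaxitive ν := by
      refine ⟨⟨?_, ?_⟩, ?_⟩
      · simp only [hν_def, Set.empty_inter, hτ.1.1, lt_irrefl, if_false]
      · intro A B hA hB
        have h1 : (A ∪ B) ∩ R = (A ∩ R) ∪ (B ∩ R) := Set.union_inter_distrib_right _ _ _
        have h2 : τ ((A ∪ B) ∩ R) = max (τ (A ∩ R)) (τ (B ∩ R)) := by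
          rw [h1]
          exact hτ.1.2 _ _ (hA.inter hRmeas) (hB.inter hRmeas)
        simp only [hν_def]
        rw [h2]
        rcases lt_or_ge 0 (τ (A ∩ R)) with hA' | hA'
        · rw [if_pos hA', if_pos (lt_of_lt_of_le hA' (le_max_left _ _))]
          rcases lt_or_ge 0 (τ (B ∩ R)) with hB' | hB'
          · rw [if_pos hB', max_self]
          · rw [if_neg (not_lt.mpr hB'), max_eq_left (zero_le)]
        · rw [if_neg (not_lt.mpr hA')]
          rcases lt_or_ge 0 (τ (B ∩ R)) with hB' | hB'
          · rw [if_pos hB', if_pos (lt_of_lt_of_le hB' (le_max_right _ _)),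
              max_eq_right (zero_le)]
          · have hA0 : τ (A ∩ R) = 0 := le_antisymm hA' (zero_le)
            have hB0 : τ (B ∩ R) = 0 := le_antisymm hB' (zero_le)
            rw [if_neg (by rw [hA0, hB0, max_self]; exact lt_irrefl 0),
              if_neg (not_lt.mpr hB'), max_self]
      · intro f hf hmono
        have h1 : (⋃ n, f n) ∩ R = ⋃ n, (f n ∩ R) := Set.iUnion_inter R f
        have h2 : τ ((⋃ n, f n) ∩ R) = ⨆ n, τ (f n ∩ R) := by
          rw [h1]
          exact hτ.2 _ (fun n => (hf n).inter hRmeas)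
            (fun k l hkl => Set.inter_subset_inter_left _ (hmono hkl))
        simp only [hν_def, h2]
        by_cases hcase : 0 < ⨆ n, τ (f n ∩ R)
        · rw [if_pos hcase]
          obtain ⟨n, hn⟩ := lt_iSup_iff.mp hcase
          apply le_antisymm
          · apply le_iSup_of_le n
            rw [if_pos hn]
          · apply iSup_le
            intro k
            split <;> simp
        · rw [if_neg hcase]
          push_neg at hcase
          apply le_antisymm (zero_le)
          apply iSup_le
          intro n
          have : τ (f n ∩ R) = 0 := le_antisymm
            (le_trans (le_iSup (fun n => τ (f n ∩ R)) n) hcase) (zero_le)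
          rw [if_neg (by rw [this]; exact lt_irrefl 0)]
    have hνo : OdotAbsCont p ν τ := by
      intro B hB
      simp only [hν_def]
      split
      case isTrue h =>
        have hBR : ¬ OdotFinite p (τ (B ∩ R)) := by
          intro hfin
          rw [hRnull (B ∩ R) (hB.inter hRmeas) Set.inter_subset_right hfin] at h
          exact lt_irrefl 0 h
        have h1 : p.one < τ (B ∩ R) := hone_lt _ hBR
        calc p.one = p.op p.one p.one := (p.one_op p.one).symm
          _ ≤ p.op ⊤ p.one := p.monoLeft _ le_top
          _ ≤ p.op ⊤ (τ (B ∩ R)) := p.monoRight _ h1.le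
          _ ≤ p.op ⊤ (τ B) := p.monoRight _
              (maxitive_mono hτ.1 (hB.inter hRmeas) hB Set.inter_subset_left)
      case isFalse => exact zero_le
    obtain ⟨c, hcpre, hcint⟩ := hRN ν hνmax hνo
    have hczero_meas : MeasurableSet {x | c x = 0} := by
      have h0 : {x | c x = 0} = {x | (0:ℝ≥0∞) < c x}ᶜ := by
        ext x
        simp [pos_iff_ne_zero]
      rw [h0]
      exact (hcpre 0).compl
    -- τ (R ∩ {c = 0}) = 0
    have hY : τ (R ∩ {x | c x = 0}) = 0 := by
      have hYmeas : MeasurableSet (R ∩ {x | c x = 0}) := hRmeas.inter hczero_meas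
      have hJ := hcint _ hYmeas
      have hempty : ∀ t : ℝ≥0∞, (R ∩ {x | c x = 0}) ∩ {x | t < c x} = ∅ := by
        intro t
        ext x
        simp only [Set.mem_inter_iff, Set.mem_setOf_eq, Set.mem_empty_iff_false, iff_false,
          not_and]
        rintro ⟨_, h⟩ hlt
        rw [h] at hlt
        exact absurd hlt (by simp)
      have hν0 : ν (R ∩ {x | c x = 0}) = 0 := by
        rw [hJ]
        apply le_antisymm _ (zero_le)
        apply iSup₂_le
        intro t _
        rw [hempty t, hτ.1.1, p.op_zero]
      by_contra hcon
      have : 0 < τ ((R ∩ {x | c x = 0}) ∩ R) := by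
        rw [Set.inter_comm R {x | c x = 0}, Set.inter_assoc, Set.inter_self,
          ← Set.inter_comm R {x | c x = 0}]
        exact pos_iff_ne_zero.mpr hcon
      rw [hν_def] at hν0
      simp only [if_pos this] at hν0
      exact PM.one_ne_zero' p hν0
    -- there is t > 0 with τ (R ∩ {c > t}) > 0
    have hsplit : R = (R ∩ {x | c x = 0}) ∪ (R ∩ {x | 0 < c x}) := by
      ext x
      simp only [Set.mem_union, Set.mem_inter_iff, Set.mem_setOf_eq]
      constructor
      · intro hx
        rcases eq_or_ne (c x) 0 with h | h
        · exact Or.inl ⟨hx, h⟩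
        · exact Or.inr ⟨hx, pos_iff_ne_zero.mpr h⟩
      · rintro (⟨hx, _⟩ | ⟨hx, _⟩) <;> exact hx
    have hpos2 : 0 < τ (R ∩ {x | 0 < c x}) := by
      have h3 : τ R = max (τ (R ∩ {x | c x = 0})) (τ (R ∩ {x | 0 < c x})) := by
        conv_lhs => rw [hsplit]
        exact hτ.1.2 _ _ (hRmeas.inter hczero_meas) (hRmeas.inter (hcpre 0))
      rw [hY, max_eq_right (zero_le)] at h3
      rw [← h3]
      exact hτRpos
    have hcup : R ∩ {x | 0 < c x} = ⋃ n : ℕ, R ∩ {x | ((n:ℝ≥0∞))⁻¹ < c x} := by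
      ext x
      simp only [Set.mem_inter_iff, Set.mem_iUnion, Set.mem_setOf_eq]
      constructor
      · rintro ⟨hxR, hxc⟩
        obtain ⟨n, hn⟩ := ENNReal.exists_inv_nat_lt (ne_of_gt hxc)
        exact ⟨n, hxR, hn⟩
      · rintro ⟨n, hxR, hn⟩
        exact ⟨hxR, lt_of_le_of_lt (zero_le) hn⟩
    have hsup : τ (R ∩ {x | 0 < c x}) = ⨆ n : ℕ, τ (R ∩ {x | ((n:ℝ≥0∞))⁻¹ < c x}) := by
      conv_lhs => rw [hcup]
      exact smax_iUnion hτ _ (fun n => hRmeas.inter (hcpre _))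
    rw [hsup] at hpos2
    obtain ⟨n, hn⟩ := lt_iSup_iff.mp hpos2
    set t : ℝ≥0∞ := ((n:ℝ≥0∞))⁻¹ with ht_def
    have htpos : 0 < t := ENNReal.inv_pos.mpr (ENNReal.natCast_ne_top n)
    have ht_top : t < ⊤ := by
      rcases Nat.eq_zero_or_pos n with h | h
      · exfalso
        subst h
        have hempty2 : R ∩ {x | ((0:ℕ):ℝ≥0∞)⁻¹ < c x} = ∅ := by
          ext x
          simp only [Set.mem_inter_iff, Set.mem_setOf_eq, Set.mem_empty_iff_false, iff_false,
            not_and]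
          intro _
          simp
        rw [hempty2, hτ.1.1] at hn
        exact lt_irrefl 0 hn
      · exact ENNReal.inv_lt_top.mpr (by exact_mod_cast h)
    set Z := R ∩ {x | t < c x} with hZ_def
    have hZmeas : MeasurableSet Z := hRmeas.inter (hcpre t)
    have hZpos : 0 < τ Z := hn
    have hZfin : ¬ OdotFinite p (τ Z) := by
      intro hfin
      rw [hRnull Z hZmeas Set.inter_subset_left hfin] at hZpos
      exact lt_irrefl 0 hZpos
    have hνZ : ν Z = p.one := by
      rw [hν_def]
      have : 0 < τ (Z ∩ R) := by
        have hZR : Z ∩ R = Z := by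
          rw [hZ_def]
          rw [Set.inter_comm R {x | t < c x}, Set.inter_assoc, Set.inter_self,
            ← Set.inter_comm R {x | t < c x}]
        rw [hZR]
        exact hZpos
      simp only [if_pos this]
    have hJZ := hcint Z hZmeas
    have hlow : p.op t (τ Z) ≤ p.one := by
      have h5 : Z ∩ {x | t < c x} = Z := by
        rw [hZ_def, Set.inter_assoc, Set.inter_self]
      calc p.op t (τ Z) = p.op t (τ (Z ∩ {x | t < c x})) := by rw [h5]
        _ ≤ iInt p τ c Z := le_iSup₂_of_le t ht_top le_rfl
        _ = ν Z := (hJZ).symm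
        _ = p.one := hνZ
    -- contradiction with non-degeneracy
    have hδ : 0 < ⨅ s ∈ Set.Ioi (0:ℝ≥0∞), p.op s (τ Z) := pos_iff_ne_zero.mpr hZfin
    have hbound : ∀ s : ℝ≥0∞, 0 < s → (⨅ u ∈ Set.Ioi (0:ℝ≥0∞), p.op u (τ Z)) ≤ p.op s p.one := by
      intro s hs
      have h6 : p.op s (p.op t (τ Z)) ≤ p.op s p.one := p.monoRight _ hlow
      rw [← p.assoc] at h6
      have h7 : 0 < p.op s t := by
        rcases pos_iff_ne_zero.mp hs, pos_iff_ne_zero.mp htpos with ⟨hs', ht'⟩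
        apply pos_iff_ne_zero.mpr
        intro h0
        rcases p.eq_zero _ _ h0 with h | h
        · exact hs' h
        · exact ht' h
      calc (⨅ u ∈ Set.Ioi (0:ℝ≥0∞), p.op u (τ Z)) ≤ p.op (p.op s t) (τ Z) :=
            biInf_le _ (Set.mem_Ioi.mpr h7)
        _ ≤ p.op s p.one := h6
    have hcontra : (⨅ u ∈ Set.Ioi (0:ℝ≥0∞), p.op u (τ Z)) ≤
        ⨅ s ∈ Set.Ioi (0:ℝ≥0∞), p.op s p.one := le_iInf₂ fun s hs => hbound s hs
    rw [hp] at hcontra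
    rw [le_zero_iff] at hcontra
    exact hZfin hcontra

end RNAux

/-- For a non-degenerate pseudo-multiplication `⊙`, a σ-maxitive measure has the
Radon–Nikodym property with respect to the idempotent `⊙`-integral iff it is
σ-`⊙`-finite and σ-principal. -/
theorem rnProperty_iff_sigmaOdotFinite_and_sigmaPrincipal [MeasurableSpace E]
    (p : PseudoMul) (hp : OdotFinite p p.one)
    (τ : Set E → ℝ≥0∞) (hτ : SigmaMaxitive τ) :
    RNProperty p τ ↔ SigmaOdotFinite p τ ∧ SigmaPrincipal τ := by
  constructor
  · intro hRN
    have hpr : SigmaPrincipal τ :=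
      RNAux.principal_of_ccc hτ (fun fam h1 h2 h3 => RNAux.ccc_of_rn p hτ hRN fam h1 h2 h3)
    exact ⟨RNAux.sigmaOdotFinite_of p hp hτ hRN hpr, hpr⟩
  · rintro ⟨hfin, hpr⟩
    exact RNAux.rn_suff p hτ hfin hpr
end

section
/- A σ-maxitive measure τ on a σ-algebra 𝓑 satisfies the Radon–Nikodym property with respect to the Shilkret integral (i.e. every σ-maxitive ν on 𝓑 with ν ≪ τ in the sense ν(B) ≤ ∞·τ(B) for all B admits a 𝓑-measurable c : E → [0,∞] with ν(B) = sup_{t≥0} t·τ(B ∩ {c > t}) for all B ∈ 𝓑) if and only if τ is σ-finite and σ-principal. -/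
open scoped ENNReal
open Set Filter MeasureTheory

variable {E : Type*}

section RNhelpers
set_option linter.unusedSectionVars false
variable [MeasurableSpace E] {ν τ μ₁ μ₂ : Set E → ℝ≥0∞}

lemma Maxitive.mono (hν : Maxitive ν) {A B : Set E} (hA : MeasurableSet A)
    (hB : MeasurableSet B) (h : A ⊆ B) : ν A ≤ ν B := by
  have hub : A ∪ B = B := union_eq_self_of_subset_left h
  calc ν A ≤ max (ν A) (ν B) := le_max_left _ _
  _ = ν (A ∪ B) := (hν.2 A B hA hB).symm
  _ = ν B := by rw [hub]

/-- partial unions -/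
private def acc (f : ℕ → Set E) : ℕ → Set E
  | 0 => f 0
  | n + 1 => acc f n ∪ f (n + 1)

lemma acc_meas {f : ℕ → Set E} (hf : ∀ n, MeasurableSet (f n)) (n : ℕ) :
    MeasurableSet (acc f n) := by
  induction n with
  | zero => exact hf 0
  | succ n ih => exact ih.union (hf (n + 1))

lemma acc_mono (f : ℕ → Set E) : Monotone (acc f) :=
  monotone_nat_of_le_succ fun _ => subset_union_left

lemma subset_acc (f : ℕ → Set E) (n : ℕ) : f n ⊆ acc f n := by
  cases n with
  | zero => exact subset_rfl
  | succ n => exact subset_union_right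

lemma acc_subset {f : ℕ → Set E} {A : Set E} (h : ∀ n, f n ⊆ A) (n : ℕ) : acc f n ⊆ A := by
  induction n with
  | zero => exact h 0
  | succ n ih => exact union_subset ih (h (n + 1))

lemma iUnion_acc (f : ℕ → Set E) : ⋃ n, acc f n = ⋃ n, f n :=
  subset_antisymm (iUnion_subset (acc_subset fun n => subset_iUnion f n))
    (iUnion_mono (subset_acc f))

lemma key_pattern (h₁ : SigmaMaxitive μ₁) (h₂ : SigmaMaxitive μ₂) {f : ℕ → Set E}
    (hf : ∀ n, MeasurableSet (f n)) (h : ∀ n, μ₁ (f n) ≤ μ₂ (f n)) :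
    μ₁ (⋃ n, f n) ≤ μ₂ (⋃ n, f n) := by
  have hacc : ∀ n, μ₁ (acc f n) ≤ μ₂ (acc f n) := by
    intro n
    induction n with
    | zero => exact h 0
    | succ n ih =>
      show μ₁ (acc f n ∪ f (n+1)) ≤ μ₂ (acc f n ∪ f (n+1))
      rw [h₁.1.2 _ _ (acc_meas hf n) (hf (n+1)), h₂.1.2 _ _ (acc_meas hf n) (hf (n+1))]
      exact max_le_max ih (h (n+1))
  rw [← iUnion_acc f, h₁.2 _ (acc_meas hf) (acc_mono f), h₂.2 _ (acc_meas hf) (acc_mono f)]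
  exact iSup_mono hacc

lemma smul_sigmaMaxitive (hτ : SigmaMaxitive τ) (s : ℝ≥0∞) :
    SigmaMaxitive (fun B => s * τ B) := by
  refine ⟨⟨by simp [hτ.1.1], fun A B hA hB => ?_⟩, fun B hB hm => ?_⟩
  · show s * τ (A ∪ B) = max (s * τ A) (s * τ B)
    rw [hτ.1.2 A B hA hB]
    rcases max_cases (τ A) (τ B) with ⟨h1, h2⟩ | ⟨h1, h2⟩
    · rw [h1, max_eq_left (mul_le_mul_right h2 s)]
    · rw [h1, max_eq_right (mul_le_mul_right h2.le s)]
  · show s * τ (⋃ n, B n) = ⨆ n, s * τ (B n)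
    rw [hτ.2 B hB hm, ENNReal.mul_iSup]

lemma zero_sigmaMaxitive : SigmaMaxitive (fun _ : Set E => (0 : ℝ≥0∞)) :=
  ⟨⟨rfl, fun _ _ _ _ => by simp⟩, fun _ _ _ => by simp⟩

lemma Negligible.mono' {N N' : Set E} (h : N ⊆ N') (hN' : Negligible τ N') :
    Negligible τ N := by
  obtain ⟨B, hB, hsub, hz⟩ := hN'
  exact ⟨B, hB, h.trans hsub, hz⟩

lemma negligible_of_meas {C : Set E} (hC : MeasurableSet C) (h : τ C = 0) : Negligible τ C :=
  ⟨C, hC, subset_rfl, h⟩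

lemma Negligible.meas_zero (hτ : Maxitive τ) {C : Set E} (hC : MeasurableSet C)
    (h : Negligible τ C) : τ C = 0 := by
  obtain ⟨B, hB, hsub, hz⟩ := h
  exact le_antisymm (hz ▸ hτ.mono hC hB hsub) zero_le

lemma negligible_iUnion (hτ : SigmaMaxitive τ) {f : ℕ → Set E}
    (h : ∀ n, Negligible τ (f n)) : Negligible τ (⋃ n, f n) := by
  choose B hB hsub hz using h
  refine ⟨⋃ n, B n, MeasurableSet.iUnion hB, iUnion_mono hsub, ?_⟩
  have := key_pattern hτ zero_sigmaMaxitive hB (fun n => le_of_eq (hz n))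
  exact le_antisymm this zero_le

lemma negligible_union (hτ : SigmaMaxitive τ) {N N' : Set E}
    (h : Negligible τ N) (h' : Negligible τ N') : Negligible τ (N ∪ N') := by
  have hcl := negligible_iUnion hτ (f := fun n => if n = 0 then N else N') ?_
  · refine hcl.mono' ?_
    intro x hx
    rcases hx with hx | hx
    · exact mem_iUnion.2 ⟨0, by simpa⟩
    · exact mem_iUnion.2 ⟨1, by simpa⟩
  · intro n; by_cases hn : n = 0 <;> simp [hn, h, h']

lemma pair_mem_union_closure {I : Set (Set E)}
    (hIunion : ∀ f : ℕ → Set E, (∀ n, f n ∈ I) → (⋃ n, f n) ∈ I)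
    {SA SB : Set E} (hA : SA ∈ I) (hB : SB ∈ I) : SA ∪ SB ∈ I := by
  have h := hIunion (fun n => if n = 0 then SA else SB) ?_
  · have he : (⋃ n, if n = 0 then SA else SB) = SA ∪ SB := by
      apply subset_antisymm
      · refine iUnion_subset fun n => ?_
        by_cases hn : n = 0 <;> simp [hn]
      · refine union_subset ?_ ?_
        · exact subset_iUnion_of_subset 0 (by simp)
        · exact subset_iUnion_of_subset 1 (by simp)
    rwa [he] at h
  · intro n; by_cases hn : n = 0 <;> simp [hn, hA, hB]

end RNhelpers


section RNforward
set_option linter.unusedSectionVars false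
variable [MeasurableSpace E] {τ : Set E → ℝ≥0∞}

lemma rn_sigmaFinite (hτ : SigmaMaxitive τ)
    (hRN : ∀ ν : Set E → ℝ≥0∞, SigmaMaxitive ν →
        (∀ B : Set E, MeasurableSet B → ν B ≤ ⊤ * τ B) →
        ∃ c : E → ℝ≥0∞, Premeasurable c ∧ ∀ B : Set E, MeasurableSet B →
          ν B = ⨆ t ∈ Set.Iio (⊤ : ℝ≥0∞), t * τ (B ∩ {x | t < c x})) :
    ∃ B : ℕ → Set E, (∀ n, MeasurableSet (B n)) ∧ (⋃ n, B n) = Set.univ ∧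
        ∀ n, τ (B n) < ⊤ := by
  classical
  set ν : Set E → ℝ≥0∞ := fun B => if τ B = 0 then 0 else 1 with hνdef
  have hν : SigmaMaxitive ν := by
    refine ⟨⟨by simp [hνdef, hτ.1.1], fun A B hA hB => ?_⟩, fun B hB hm => ?_⟩
    · have h := hτ.1.2 A B hA hB
      by_cases hA0 : τ A = 0 <;> by_cases hB0 : τ B = 0
      · have hU : τ (A ∪ B) = 0 := by rw [h, hA0, hB0]; simp
        simp [hνdef, hU, hA0, hB0]
      · have hU : τ (A ∪ B) ≠ 0 := by
          rw [h]; intro hcon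
          exact hB0 (le_antisymm (hcon ▸ le_max_right _ _) zero_le)
        simp [hνdef, hU, hA0, hB0]
      · have hU : τ (A ∪ B) ≠ 0 := by
          rw [h]; intro hcon
          exact hA0 (le_antisymm (hcon ▸ le_max_left _ _) zero_le)
        simp [hνdef, hU, hA0, hB0]
      · have hU : τ (A ∪ B) ≠ 0 := by
          rw [h]; intro hcon
          exact hA0 (le_antisymm (hcon ▸ le_max_left _ _) zero_le)
        simp [hνdef, hU, hA0, hB0]
    · have h := hτ.2 B hB hm
      by_cases hall : ∀ n, τ (B n) = 0
      · have h0 : τ (⋃ n, B n) = 0 := by rw [h]; simp [hall]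
        simp [hνdef, h0, hall]
      · push_neg at hall
        obtain ⟨m, hm0⟩ := hall
        have hU : τ (⋃ n, B n) ≠ 0 := by
          rw [h]; intro h0
          exact hm0 (le_antisymm (h0 ▸ le_iSup (fun n => τ (B n)) m) zero_le)
        have hU1 : ν (⋃ n, B n) = 1 := if_neg hU
        rw [hU1]
        refine le_antisymm (le_iSup_of_le m (by simp [hνdef, hm0])) ?_
        refine iSup_le fun n => ?_
        by_cases h0 : τ (B n) = 0 <;> simp [hνdef, h0]
  have hac : ∀ B : Set E, MeasurableSet B → ν B ≤ ⊤ * τ B := by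
    intro B _
    by_cases h0 : τ B = 0
    · simp [hνdef, h0]
    · rw [ENNReal.top_mul h0]; exact le_top
  obtain ⟨c, hc, hint⟩ := hRN ν hν hac
  refine ⟨fun n => Nat.casesOn n {x | (0:ℝ≥0∞) < c x}ᶜ
      (fun m => {x | ((m:ℝ≥0∞)+1)⁻¹ < c x}), fun n => ?_, ?_, fun n => ?_⟩
  · cases n with
    | zero => exact (hc 0).compl
    | succ m => exact hc _
  · rw [Set.eq_univ_iff_forall]
    intro x
    by_cases h0 : c x = 0
    · exact mem_iUnion.2 ⟨0, by simp [h0]⟩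
    · obtain ⟨m, hm⟩ := ENNReal.exists_inv_nat_lt h0
      refine mem_iUnion.2 ⟨m + 1, ?_⟩
      have hle : ((m:ℝ≥0∞)+1)⁻¹ ≤ ((m:ℝ≥0∞))⁻¹ :=
        ENNReal.inv_le_inv.2 (le_add_of_nonneg_right zero_le)
      exact lt_of_le_of_lt hle hm
  · cases n with
    | zero =>
      have hmeas : MeasurableSet {x | (0:ℝ≥0∞) < c x}ᶜ := (hc 0).compl
      have hint0 := hint _ hmeas
      have hempty : ∀ t : ℝ≥0∞, {x | (0:ℝ≥0∞) < c x}ᶜ ∩ {x | t < c x} = ∅ := by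
        intro t
        rw [Set.eq_empty_iff_forall_notMem]
        rintro x ⟨hx1, hx2⟩
        exact hx1 (lt_of_le_of_lt (zero_le (a := t)) hx2)
      have hν0 : ν {x | (0:ℝ≥0∞) < c x}ᶜ = 0 := by
        rw [hint0]
        refine le_antisymm (iSup₂_le fun t _ => ?_) zero_le
        rw [hempty t, hτ.1.1, mul_zero]
      show τ {x | (0:ℝ≥0∞) < c x}ᶜ < ⊤
      have hτ0 : τ {x | (0:ℝ≥0∞) < c x}ᶜ = 0 := by
        by_contra h0
        have h1 : ν {x | (0:ℝ≥0∞) < c x}ᶜ = 1 := if_neg h0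
        rw [hν0] at h1
        exact one_ne_zero h1.symm
      rw [hτ0]
      exact ENNReal.zero_lt_top
    | succ m =>
      show τ {x | ((m:ℝ≥0∞)+1)⁻¹ < c x} < ⊤
      set t : ℝ≥0∞ := ((m:ℝ≥0∞)+1)⁻¹ with htdef
      have htne : ((m:ℝ≥0∞)+1) ≠ 0 := (lt_of_lt_of_le zero_lt_one le_add_self).ne' 
      have htne' : ((m:ℝ≥0∞)+1) ≠ ⊤ := by
        exact ENNReal.add_ne_top.2 ⟨ENNReal.natCast_ne_top m, ENNReal.one_ne_top⟩
      have ht0 : t ≠ 0 := ENNReal.inv_ne_zero.2 htne'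
      have htT : t < ⊤ := ENNReal.inv_lt_top.2 (lt_of_lt_of_le zero_lt_one le_add_self)
      have hintm := hint _ (hc t)
      have hbound : ν {x | t < c x} ≤ 1 := by
        by_cases h0 : τ {x | t < c x} = 0 <;> simp [hνdef, h0]
      have hterm : t * τ ({x | t < c x} ∩ {x | t < c x}) ≤ 1 := by
        calc t * τ ({x | t < c x} ∩ {x | t < c x})
            ≤ ⨆ u ∈ Set.Iio (⊤:ℝ≥0∞), u * τ ({x | t < c x} ∩ {x | u < c x}) :=
              le_iSup₂_of_le t htT le_rfl
        _ = ν {x | t < c x} := (hintm).symm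
        _ ≤ 1 := hbound
      rw [Set.inter_self] at hterm
      have h2 : τ {x | t < c x} ≤ t⁻¹ := by
        have h3 := mul_le_mul_right hterm t⁻¹
        rwa [← mul_assoc, ENNReal.inv_mul_cancel ht0 htT.ne, one_mul, mul_one] at h3
      calc τ {x | t < c x} ≤ t⁻¹ := h2
      _ = (m:ℝ≥0∞) + 1 := by rw [htdef, inv_inv]
      _ < ⊤ := htne'.lt_top

lemma rn_sigmaPrincipal (hτ : SigmaMaxitive τ)
    (hRN : ∀ ν : Set E → ℝ≥0∞, SigmaMaxitive ν →
        (∀ B : Set E, MeasurableSet B → ν B ≤ ⊤ * τ B) →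
        ∃ c : E → ℝ≥0∞, Premeasurable c ∧ ∀ B : Set E, MeasurableSet B →
          ν B = ⨆ t ∈ Set.Iio (⊤ : ℝ≥0∞), t * τ (B ∩ {x | t < c x})) :
    SigmaPrincipal τ := by
  classical
  intro I hI
  obtain ⟨S₁, hS₁⟩ := hI.1
  have hImeas := hI.2.1
  have hIunion := hI.2.2.1
  have hIdown := hI.2.2.2
  set P : Set E → Prop := fun B => ∃ S ∈ I, Negligible τ (B \ S) with hPdef
  have hPmono : ∀ {A B : Set E}, A ⊆ B → P B → P A := by
    rintro A B hsub ⟨S, hS, hneg⟩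
    exact ⟨S, hS, hneg.mono' (Set.diff_subset_diff_left hsub)⟩
  have hP2 : ∀ {A B : Set E}, P A → P B → P (A ∪ B) := by
    rintro A B ⟨SA, hSA, nA⟩ ⟨SB, hSB, nB⟩
    refine ⟨SA ∪ SB, pair_mem_union_closure hIunion hSA hSB, ?_⟩
    refine (negligible_union hτ nA nB).mono' ?_
    rintro x ⟨hx, hxS⟩
    rcases hx with hx | hx
    · exact Or.inl ⟨hx, fun h => hxS (Or.inl h)⟩
    · exact Or.inr ⟨hx, fun h => hxS (Or.inr h)⟩
  have hPcnt : ∀ {f : ℕ → Set E}, (∀ n, P (f n)) → P (⋃ n, f n) := by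
    intro f hf
    choose S hS hneg using hf
    refine ⟨⋃ n, S n, hIunion S hS, ?_⟩
    refine (negligible_iUnion hτ hneg).mono' ?_
    rintro x ⟨hx, hxS⟩
    obtain ⟨n, hn⟩ := mem_iUnion.1 hx
    exact mem_iUnion.2 ⟨n, hn, fun h => hxS (mem_iUnion.2 ⟨n, h⟩)⟩
  set ν : Set E → ℝ≥0∞ := fun B => if P B then 0 else 1 with hνdef
  have hemptyI : ∅ ∈ I := hIdown ∅ S₁ MeasurableSet.empty hS₁ (Set.empty_subset _)
  have hPempty : P ∅ := ⟨∅, hemptyI, by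
    simpa using negligible_of_meas MeasurableSet.empty hτ.1.1⟩
  have hν : SigmaMaxitive ν := by
    refine ⟨⟨by simp [hνdef, hPempty], fun A B hA hB => ?_⟩, fun B hB hm => ?_⟩
    · by_cases hPA : P A <;> by_cases hPB : P B
      · simp [hνdef, hPA, hPB, hP2 hPA hPB]
      · have : ¬ P (A ∪ B) := fun h => hPB (hPmono Set.subset_union_right h)
        simp [hνdef, hPA, hPB, this]
      · have : ¬ P (A ∪ B) := fun h => hPA (hPmono Set.subset_union_left h)
        simp [hνdef, hPA, hPB, this]
      · have : ¬ P (A ∪ B) := fun h => hPA (hPmono Set.subset_union_left h)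
        simp [hνdef, hPA, hPB, this]
    · by_cases hall : ∀ n, P (B n)
      · have hU : P (⋃ n, B n) := hPcnt hall
        simp [hνdef, hU, hall]
      · push_neg at hall
        obtain ⟨m, hm0⟩ := hall
        have hU : ¬ P (⋃ n, B n) := fun h => hm0 (hPmono (subset_iUnion B m) h)
        have hU1 : ν (⋃ n, B n) = 1 := if_neg hU
        rw [hU1]
        refine le_antisymm (le_iSup_of_le m (by simp [hνdef, hm0])) ?_
        refine iSup_le fun n => ?_
        by_cases h0 : P (B n) <;> simp [hνdef, h0]
  have hac : ∀ B : Set E, MeasurableSet B → ν B ≤ ⊤ * τ B := by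
    intro B hB
    by_cases h0 : τ B = 0
    · have hPB : P B := ⟨∅, hemptyI, by
        simpa using negligible_of_meas hB h0⟩
      simp [hνdef, hPB]
    · rw [ENNReal.top_mul h0]; exact le_top
  obtain ⟨c, hc, hint⟩ := hRN ν hν hac
  -- claim 1 : for S ∈ I, τ (S ∩ {0 < c}) = 0
  have claim1 : ∀ S ∈ I, τ (S ∩ {x | (0:ℝ≥0∞) < c x}) = 0 := by
    intro S hS
    have hSmeas := hImeas S hS
    have hPS : P S := ⟨S, hS, by
      simpa [Set.diff_self] using negligible_of_meas MeasurableSet.empty hτ.1.1⟩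
    have hνS : ν S = 0 := if_pos hPS
    have hterms : ∀ t : ℝ≥0∞, t < ⊤ → t * τ (S ∩ {x | t < c x}) = 0 := by
      intro t ht
      have h1 : t * τ (S ∩ {x | t < c x}) ≤ 0 := by
        rw [← hνS, hint S hSmeas]
        exact le_iSup₂_of_le t ht le_rfl
      exact le_antisymm h1 zero_le
    have hlevel : ∀ m : ℕ, τ (S ∩ {x | ((m:ℝ≥0∞)+1)⁻¹ < c x}) = 0 := by
      intro m
      have htne' : ((m:ℝ≥0∞)+1) ≠ ⊤ :=
        ENNReal.add_ne_top.2 ⟨ENNReal.natCast_ne_top m, ENNReal.one_ne_top⟩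
      have ht0 : ((m:ℝ≥0∞)+1)⁻¹ ≠ 0 := ENNReal.inv_ne_zero.2 htne'
      have htT : ((m:ℝ≥0∞)+1)⁻¹ < ⊤ :=
        ENNReal.inv_lt_top.2 (lt_of_lt_of_le zero_lt_one le_add_self)
      have := hterms _ htT
      rcases mul_eq_zero.1 this with h | h
      · exact absurd h ht0
      · exact h
    have hcov : S ∩ {x | (0:ℝ≥0∞) < c x}
        = ⋃ m : ℕ, S ∩ {x | ((m:ℝ≥0∞)+1)⁻¹ < c x} := by
      apply subset_antisymm
      · rintro x ⟨hxS, hxc⟩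
        obtain ⟨m, hm⟩ := ENNReal.exists_inv_nat_lt (pos_iff_ne_zero.1 hxc)
        have hle : ((m:ℝ≥0∞)+1)⁻¹ ≤ ((m:ℝ≥0∞))⁻¹ :=
          ENNReal.inv_le_inv.2 (le_add_of_nonneg_right zero_le)
        exact mem_iUnion.2 ⟨m, hxS, lt_of_le_of_lt hle hm⟩
      · refine iUnion_subset fun m => ?_
        rintro x ⟨hxS, hxc⟩
        exact ⟨hxS, show (0:ℝ≥0∞) < c x from lt_of_le_of_lt zero_le hxc⟩
    have hmono : Monotone (fun m : ℕ => S ∩ {x | ((m:ℝ≥0∞)+1)⁻¹ < c x}) := by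
      intro m m' hmm
      have : ((m':ℝ≥0∞)+1)⁻¹ ≤ ((m:ℝ≥0∞)+1)⁻¹ := by
        apply ENNReal.inv_le_inv.2
        exact add_le_add_left (by exact_mod_cast hmm) 1
      exact Set.inter_subset_inter_right _ (fun x hx => lt_of_le_of_lt this hx)
    rw [hcov, hτ.2 _ (fun m => hSmeas.inter (hc _)) hmono]
    simp [hlevel]
  -- claim 2 : Z = {c = 0} is in the saturated ideal
  set Z : Set E := {x | (0:ℝ≥0∞) < c x}ᶜ with hZdef
  have hZmeas : MeasurableSet Z := (hc 0).compl
  have hνZ : ν Z = 0 := by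
    rw [hint Z hZmeas]
    refine le_antisymm (iSup₂_le fun t _ => ?_) zero_le
    have hempty : Z ∩ {x | t < c x} = ∅ := by
      rw [Set.eq_empty_iff_forall_notMem]
      rintro x ⟨hx1, hx2⟩
      exact hx1 (lt_of_le_of_lt (zero_le (a := t)) hx2)
    rw [hempty, hτ.1.1, mul_zero]
  have hPZ : P Z := by
    by_contra h
    rw [hνdef] at hνZ
    simp only [h, if_neg] at hνZ
    exact one_ne_zero hνZ
  obtain ⟨S₀, hS₀I, hS₀neg⟩ := hPZ
  refine ⟨S₀, hS₀I, fun S hS => ?_⟩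
  have hsub : S \ S₀ ⊆ (S ∩ {x | (0:ℝ≥0∞) < c x}) ∪ (Z \ S₀) := by
    rintro x ⟨hxS, hxS₀⟩
    by_cases hxc : (0:ℝ≥0∞) < c x
    · exact Or.inl ⟨hxS, hxc⟩
    · exact Or.inr ⟨hxc, hxS₀⟩
  refine Negligible.mono' hsub (negligible_union hτ ?_ hS₀neg)
  exact negligible_of_meas ((hImeas S hS).inter (hc 0)) (claim1 S hS)

end RNforward


section RNbackward
set_option linter.unusedSectionVars false
set_option maxHeartbeats 1000000
variable [MeasurableSpace E] {τ : Set E → ℝ≥0∞}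

lemma rn_exists (hτ : SigmaMaxitive τ)
    (hfin : ∃ B : ℕ → Set E, (∀ n, MeasurableSet (B n)) ∧ (⋃ n, B n) = Set.univ ∧
      ∀ n, τ (B n) < ⊤)
    (hprin : SigmaPrincipal τ)
    (ν : Set E → ℝ≥0∞) (hν : SigmaMaxitive ν)
    (hac : ∀ B : Set E, MeasurableSet B → ν B ≤ ⊤ * τ B) :
    ∃ c : E → ℝ≥0∞, Premeasurable c ∧ ∀ B : Set E, MeasurableSet B →
      ν B = ⨆ t ∈ Set.Iio (⊤ : ℝ≥0∞), t * τ (B ∩ {x | t < c x}) := by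
  classical
  have habs : ∀ B : Set E, MeasurableSet B → τ B = 0 → ν B = 0 := by
    intro B hB h0
    refine le_antisymm ?_ zero_le
    have := hac B hB
    rwa [h0, mul_zero] at this
  -- countable dense family of levels
  set q : ℕ → ℝ≥0∞ :=
    fun n => ((Real.toNNReal (((Denumerable.eqv ℚ).symm n : ℚ) : ℝ)) : ℝ≥0∞) with hqdef
  have dens : ∀ {r t : ℝ≥0∞}, r < t → ∃ n, r < q n ∧ q n < t := by
    intro r t h
    obtain ⟨p, _, h1, h2⟩ := ENNReal.lt_iff_exists_rat_btwn.1 h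
    refine ⟨(Denumerable.eqv ℚ) p, ?_, ?_⟩
    · simpa [hqdef, Equiv.symm_apply_apply] using h1
    · simpa [hqdef, Equiv.symm_apply_apply] using h2
  -- the σ-ideals
  set Idl : ℕ → Set (Set E) := fun n =>
    {A | MeasurableSet A ∧ ∀ A' : Set E, MeasurableSet A' → A' ⊆ A → ν A' ≤ q n * τ A'}
    with hIdldef
  have hIdl : ∀ n, SigmaIdeal (Idl n) := by
    intro n
    refine ⟨⟨∅, MeasurableSet.empty, fun A' _ hsub => ?_⟩, fun S hS => hS.1, ?_, ?_⟩
    · rw [Set.subset_empty_iff.1 hsub, hν.1.1]; exact zero_le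
    · intro f hf
      refine ⟨MeasurableSet.iUnion (fun k => (hf k).1), ?_⟩
      intro A' hA' hsub
      have hcov : A' = ⋃ k, A' ∩ f k := by
        rw [← Set.inter_iUnion]
        exact (Set.inter_eq_left.2 hsub).symm
      rw [hcov]
      exact key_pattern hν (smul_sigmaMaxitive hτ (q n))
        (fun k => hA'.inter (hf k).1)
        (fun k => (hf k).2 _ (hA'.inter (hf k).1) Set.inter_subset_right)
    · intro B S hB hS hsub
      exact ⟨hB, fun A' hA' h' => hS.2 A' hA' (h'.trans hsub)⟩
  choose L hLmem hLmax using fun n => hprin (Idl n) (hIdl n)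
  have hLmeas : ∀ n, MeasurableSet (L n) := fun n => (hLmem n).1
  -- the density
  set c : E → ℝ≥0∞ := fun x => ⨅ n, if x ∈ L n then q n else ⊤ with hcdef
  have hcmeas : Measurable c := by
    refine Measurable.iInf fun n => ?_
    exact Measurable.ite (hLmeas n) measurable_const measurable_const
  have hc : Premeasurable c := fun t => measurableSet_lt measurable_const hcmeas
  have hcL : ∀ n x, x ∈ L n → c x ≤ q n := by
    intro n x hx
    calc c x ≤ if x ∈ L n then q n else ⊤ := iInf_le _ n
    _ = q n := if_pos hx
  have hclt : ∀ {x : E} {a : ℝ≥0∞}, c x < a → ∃ n, x ∈ L n ∧ q n < a := by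
    intro x a h
    obtain ⟨n, hn⟩ := iInf_lt_iff.1 h
    by_cases hx : x ∈ L n
    · exact ⟨n, hx, by rwa [if_pos hx] at hn⟩
    · rw [if_neg hx] at hn
      exact absurd hn (not_lt.2 le_top)
  -- key lemma : if A is measurable and disjoint from L n, then q n * τ A ≤ ν A
  have keyLem : ∀ n (A : Set E), MeasurableSet A → A ∩ L n = ∅ → q n * τ A ≤ ν A := by
    intro n A hA hdisj
    set F : Set (Set E) := {A' | MeasurableSet A' ∧ A' ⊆ A ∧ q n * τ A' ≤ ν A'} with hFdef
    set J : Set (Set E) := {C | MeasurableSet C ∧ ∃ A' ∈ F, Negligible τ (C \ A')} with hJdef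
    have hemptyF : ∅ ∈ F :=
      ⟨MeasurableSet.empty, Set.empty_subset _, by rw [hν.1.1, hτ.1.1, mul_zero]⟩
    have hJideal : SigmaIdeal J := by
      refine ⟨⟨∅, MeasurableSet.empty, ∅, hemptyF,
        by simpa using negligible_of_meas MeasurableSet.empty hτ.1.1⟩,
        fun S hS => hS.1, ?_, ?_⟩
      · intro f hf
        choose hfm A' hA'F hneg using hf
        refine ⟨MeasurableSet.iUnion hfm, ⋃ k, A' k,
          ⟨MeasurableSet.iUnion (fun k => (hA'F k).1),
            Set.iUnion_subset (fun k => (hA'F k).2.1), ?_⟩, ?_⟩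
        · exact key_pattern (smul_sigmaMaxitive hτ (q n)) hν
            (fun k => (hA'F k).1) (fun k => (hA'F k).2.2)
        · refine (negligible_iUnion hτ (f := fun k => f k \ A' k) hneg).mono' ?_
          rintro x ⟨hx, hxA⟩
          obtain ⟨k, hk⟩ := mem_iUnion.1 hx
          exact mem_iUnion.2 ⟨k, hk, fun h => hxA (mem_iUnion.2 ⟨k, h⟩)⟩
      · rintro B S hB ⟨hSm, A', hA'F, hneg⟩ hsub
        exact ⟨hB, A', hA'F, hneg.mono' (Set.diff_subset_diff_left hsub)⟩
    obtain ⟨L', hL'J, hL'max⟩ := hprin J hJideal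
    obtain ⟨hL'meas, Astar, hAstarF, hnegL'⟩ := hL'J
    have hALzero : τ (A \ L') = 0 := by
      by_contra h0
      have hCmeas : MeasurableSet (A \ L') := hA.diff hL'meas
      have hCnI : (A \ L') ∉ Idl n := by
        intro hCI
        have hneg := hLmax n _ hCI
        have heq : (A \ L') \ L n = (A \ L') := by
          refine sdiff_eq_self_iff_disjoint.2 (Set.disjoint_iff_inter_eq_empty.2 ?_).symm
          refine Set.eq_empty_of_subset_empty ?_
          rw [← hdisj]
          exact Set.inter_subset_inter_left _ Set.diff_subset
        rw [heq] at hneg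
        exact h0 (hneg.meas_zero hτ.1 hCmeas)
      obtain ⟨A'', hA''m, hA''sub, hA''⟩ :
          ∃ A'', MeasurableSet A'' ∧ A'' ⊆ A \ L' ∧ ¬ (ν A'' ≤ q n * τ A'') := by
        by_contra hno
        push_neg at hno
        exact hCnI ⟨hCmeas, fun A' h1 h2 => hno A' h1 h2⟩
      push_neg at hA''
      have hA''F : A'' ∈ F := ⟨hA''m, hA''sub.trans Set.diff_subset, hA''.le⟩
      have hA''J : A'' ∈ J := ⟨hA''m, A'', hA''F,
        by simpa [Set.diff_self] using negligible_of_meas MeasurableSet.empty hτ.1.1⟩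
      have hnegA'' := hL'max A'' hA''J
      have heq2 : A'' \ L' = A'' := by
        refine sdiff_eq_self_iff_disjoint.2 (Set.disjoint_iff_inter_eq_empty.2 ?_).symm
        refine Set.eq_empty_of_subset_empty ?_
        rintro x ⟨hx1, hx2⟩
        exact absurd hx2 (hA''sub hx1).2
      rw [heq2] at hnegA''
      have hzero : τ A'' = 0 := hnegA''.meas_zero hτ.1 hA''m
      have hν0 : ν A'' = 0 := habs A'' hA''m hzero
      rw [hν0, hzero, mul_zero] at hA''
      exact lt_irrefl 0 hA''
    have hAAstar : τ (A \ Astar) = 0 := by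
      have hsub : A \ Astar ⊆ (A \ L') ∪ (L' \ Astar) := by
        rintro x ⟨hxA, hxAs⟩
        by_cases hxL : x ∈ L'
        · exact Or.inr ⟨hxL, hxAs⟩
        · exact Or.inl ⟨hxA, hxL⟩
      exact (Negligible.mono' hsub (negligible_union hτ
        (negligible_of_meas (hA.diff hL'meas) hALzero) hnegL')).meas_zero hτ.1
        (hA.diff (hAstarF).1)
    have hτA : τ A ≤ τ Astar := by
      have hdecomp : A = (A ∩ Astar) ∪ (A \ Astar) := (Set.inter_union_diff A Astar).symm
      calc τ A = max (τ (A ∩ Astar)) (τ (A \ Astar)) := by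
            conv_lhs => rw [hdecomp]
            exact hτ.1.2 _ _ (hA.inter (hAstarF).1) (hA.diff (hAstarF).1)
      _ = τ (A ∩ Astar) := by rw [hAAstar, max_eq_left zero_le]
      _ ≤ τ Astar := hτ.1.mono (hA.inter (hAstarF).1) (hAstarF).1 Set.inter_subset_right
    calc q n * τ A ≤ q n * τ Astar := mul_le_mul_right hτA _
    _ ≤ ν Astar := (hAstarF).2.2
    _ ≤ ν A := hν.1.mono (hAstarF).1 hA (hAstarF).2.1
  -- lower bound
  have LB : ∀ B : Set E, MeasurableSet B → ∀ t : ℝ≥0∞, t < ⊤ →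
      t * τ (B ∩ {x | t < c x}) ≤ ν B := by
    intro B hB t htT
    set A := B ∩ {x | t < c x} with hAdef
    have hAmeas : MeasurableSet A := hB.inter (hc t)
    have hνAB : ν A ≤ ν B := hν.1.mono hAmeas hB Set.inter_subset_left
    rcases eq_or_ne t 0 with rfl | ht0
    · rw [zero_mul]; exact zero_le
    have hkey : ∀ m, q m ≤ t → q m * τ A ≤ ν A := by
      intro m hm
      refine keyLem m A hAmeas ?_
      rw [Set.eq_empty_iff_forall_notMem]
      rintro x ⟨⟨_, hxc⟩, hxL⟩
      exact absurd (lt_of_le_of_lt (le_trans (hcL m x hxL) hm) hxc) (lt_irrefl _)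
    have hmain : t * τ A ≤ ν A := by
      by_contra h
      push_neg at h
      have hτA0 : τ A ≠ 0 := by
        intro h0
        rw [h0, mul_zero] at h
        exact absurd h (not_lt.2 zero_le)
      rcases eq_or_ne (τ A) ⊤ with hT | hT
      · obtain ⟨m, hm0, hmt⟩ := dens (pos_iff_ne_zero.2 ht0)
        have := hkey m hmt.le
        rw [hT, ENNReal.mul_top (pos_iff_ne_zero.1 hm0)] at this
        have hνT : ν A = ⊤ := top_le_iff.1 this
        rw [hνT] at h
        exact absurd h (not_lt.2 le_top)
      · have hdiv : ν A / τ A < t :=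
          (ENNReal.div_lt_iff (Or.inl hτA0) (Or.inl hT)).2 h
        obtain ⟨m, hm1, hm2⟩ := dens hdiv
        have h2 := hkey m hm2.le
        have h3 : ν A < q m * τ A := by
          have hcancel : ν A = (ν A / τ A) * τ A := (ENNReal.div_mul_cancel hτA0 hT).symm
          conv_lhs => rw [hcancel]
          exact ENNReal.mul_lt_mul_left hτA0 hT hm1
        exact absurd h2 (not_le.2 h3)
    exact hmain.trans hνAB
  -- upper estimate on sets of subideals
  have step2 : ∀ (a : ℝ≥0∞) (A : Set E), MeasurableSet A → A ⊆ {x | c x < a} →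
      ν A ≤ a * τ A := by
    intro a A hA hsub
    have hTmeas : ∀ m, MeasurableSet (A ∩ if q m < a then L m else ∅) := by
      intro m
      refine hA.inter ?_
      split
      · exact hLmeas m
      · exact MeasurableSet.empty
    have hcov : A = ⋃ m, A ∩ (if q m < a then L m else ∅) := by
      apply subset_antisymm
      · intro x hx
        obtain ⟨m, hxL, hqa⟩ := hclt (hsub hx)
        exact mem_iUnion.2 ⟨m, hx, by rw [if_pos hqa]; exact hxL⟩
      · exact Set.iUnion_subset fun m => Set.inter_subset_left
    conv_lhs => rw [hcov]
    conv_rhs => rw [hcov]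
    refine key_pattern hν (smul_sigmaMaxitive hτ a) hTmeas ?_
    intro m
    by_cases hqa : q m < a
    · rw [if_pos hqa]
      have h1 : ν (A ∩ L m) ≤ q m * τ (A ∩ L m) :=
        (hLmem m).2 _ (hA.inter (hLmeas m)) Set.inter_subset_right
      exact h1.trans (mul_le_mul_left hqa.le _)
    · rw [if_neg hqa]
      rw [Set.inter_empty, hν.1.1]
      exact zero_le
  -- upper bound for sets of finite measure
  have UBfin : ∀ B : Set E, MeasurableSet B → τ B ≠ ⊤ →
      ν B ≤ ⨆ t ∈ Set.Iio (⊤ : ℝ≥0∞), t * τ (B ∩ {x | t < c x}) := by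
    intro B hB hBfin
    set R := ⨆ t ∈ Set.Iio (⊤ : ℝ≥0∞), t * τ (B ∩ {x | t < c x}) with hRdef
    have hRterm : ∀ t : ℝ≥0∞, t < ⊤ → t * τ (B ∩ {x | t < c x}) ≤ R :=
      fun t ht => le_iSup₂_of_le t ht le_rfl
    -- the zero piece
    set P0 := B ∩ {x | c x = 0} with hP0def
    have hP0meas : MeasurableSet P0 := hB.inter (hcmeas (measurableSet_singleton 0))
    have hP0zero : ν P0 = 0 := by
      have hsmall : ∀ m : ℕ, ν P0 ≤ ((m:ℝ≥0∞)+1)⁻¹ * τ B := by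
        intro m
        have hpos : (0:ℝ≥0∞) < ((m:ℝ≥0∞)+1)⁻¹ :=
          ENNReal.inv_pos.2 (ENNReal.add_ne_top.2 ⟨ENNReal.natCast_ne_top m, ENNReal.one_ne_top⟩)
        have hss : P0 ⊆ {x | c x < ((m:ℝ≥0∞)+1)⁻¹} := by
          intro x hx
          show c x < ((m:ℝ≥0∞)+1)⁻¹
          have hx2 : c x = 0 := hx.2
          rw [hx2]
          exact hpos
        exact (step2 _ P0 hP0meas hss).trans
          (mul_le_mul_right (hτ.1.mono hP0meas hB Set.inter_subset_left) _)
      by_contra h0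
      rcases eq_or_ne (τ B) 0 with hτB | hτB
      · have := hsmall 0
        rw [hτB, mul_zero] at this
        exact h0 (le_antisymm this zero_le)
      · have hdivne : ν P0 / τ B ≠ 0 := (ENNReal.div_pos h0 hBfin).ne'
        obtain ⟨m, hm⟩ := ENNReal.exists_inv_nat_lt hdivne
        have hle : ((m:ℝ≥0∞)+1)⁻¹ ≤ ((m:ℝ≥0∞))⁻¹ :=
          ENNReal.inv_le_inv.2 (le_add_of_nonneg_right zero_le)
        have hlt : ((m:ℝ≥0∞)+1)⁻¹ < ν P0 / τ B := lt_of_le_of_lt hle hm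
        have hcon : ((m:ℝ≥0∞)+1)⁻¹ * τ B < ν P0 :=
          (ENNReal.lt_div_iff_mul_lt (Or.inl hτB) (Or.inl hBfin)).1 hlt
        exact absurd (hsmall m) (not_le.2 hcon)
    -- the top piece
    set PT := B ∩ ⋂ m : ℕ, {x | (m:ℝ≥0∞) < c x} with hPTdef
    have hPTmeas : MeasurableSet PT := hB.inter (MeasurableSet.iInter (fun m => hc _))
    have hPTR : ν PT ≤ R := by
      rcases eq_or_ne (τ PT) 0 with h0 | h0
      · rw [habs PT hPTmeas h0]; exact zero_le
      · have hub : ∀ m : ℕ, (m:ℝ≥0∞) * τ PT ≤ R := by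
          intro m
          refine le_trans (mul_le_mul_right (hτ.1.mono hPTmeas (hB.inter (hc _)) ?_) _)
            (hRterm m (ENNReal.natCast_lt_top m))
          exact fun x hx => ⟨hx.1, (Set.mem_iInter.1 hx.2) m⟩
        have hRtop : R = ⊤ := by
          by_contra hR
          rcases eq_or_ne (τ PT) ⊤ with hT | hT
          · have h1 := hub 1
            rw [hT, Nat.cast_one, one_mul] at h1
            exact hR (top_le_iff.1 h1)
          · have hdlt : R / τ PT ≠ ⊤ := (ENNReal.div_lt_top hR h0).ne
            obtain ⟨m, hm⟩ := ENNReal.exists_nat_gt hdlt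
            have hcon : R < (m:ℝ≥0∞) * τ PT :=
              (ENNReal.div_lt_iff (Or.inl h0) (Or.inl hT)).1 hm
            exact absurd (hub m) (not_le.2 hcon)
        rw [hRtop]; exact le_top
    -- main delta bound
    have hmain : ∀ δ : ℝ≥0∞, 1 < δ → δ ≠ ⊤ → ν B ≤ δ * δ * R := by
      intro δ hδ1 hδT
      have hδ0 : δ ≠ 0 := (zero_lt_one.trans hδ1).ne'
      set P : ℤ → Set E := fun k => (B ∩ {x | δ^(k-1) < c x}) ∩ {x | c x < δ^(k+1)} with hPdef
      have hPmeas : ∀ k, MeasurableSet (P k) :=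
        fun k => (hB.inter (hc _)).inter (hcmeas measurableSet_Iio)
      have hPbound : ∀ k, ν (P k) ≤ δ * δ * R := by
        intro k
        have h1 : ν (P k) ≤ δ^(k+1) * τ (P k) := step2 _ _ (hPmeas k) (fun x hx => hx.2)
        have h2 : τ (P k) ≤ τ (B ∩ {x | δ^(k-1) < c x}) :=
          hτ.1.mono (hPmeas k) (hB.inter (hc _)) Set.inter_subset_left
        have htlt : δ^(k-1:ℤ) < ⊤ := ENNReal.zpow_lt_top hδ0 hδT _
        have hzpow : δ^(k+1:ℤ) = δ * δ * δ^(k-1:ℤ) := by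
          have e1 : (k+1:ℤ) = 1 + (1 + (k-1)) := by ring
          rw [e1, ENNReal.zpow_add hδ0 hδT, ENNReal.zpow_add hδ0 hδT, zpow_one, ← mul_assoc]
        calc ν (P k) ≤ δ^(k+1:ℤ) * τ (B ∩ {x | δ^(k-1:ℤ) < c x}) :=
              h1.trans (mul_le_mul_right h2 _)
        _ = δ * δ * (δ^(k-1:ℤ) * τ (B ∩ {x | δ^(k-1:ℤ) < c x})) := by rw [hzpow, mul_assoc]
        _ ≤ δ * δ * R := mul_le_mul_right (hRterm _ htlt) _
      set e2 : ℕ → ℤ := fun j => (Denumerable.eqv ℤ).symm j with he2def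
      have he2surj : ∀ k : ℤ, ∃ j, e2 j = k :=
        fun k => ⟨(Denumerable.eqv ℤ) k, by simp [he2def]⟩
      set D : ℕ → Set E := fun m => ⋃ j, ⋃ (_ : j ≤ m), P (e2 j) with hDdef
      have hDmeas : ∀ m, MeasurableSet (D m) :=
        fun m => MeasurableSet.iUnion fun j => MeasurableSet.iUnion fun _ => hPmeas _
      have hDbound : ∀ m, ν (D m) ≤ δ * δ * R := by
        intro m
        induction m with
        | zero =>
          have hD0 : D 0 = P (e2 0) := by
            rw [hDdef]
            simp [Nat.le_zero]
          rw [hD0]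
          exact hPbound _
        | succ m ih =>
          have hstep : D (m+1) = D m ∪ P (e2 (m+1)) := Set.biUnion_le_succ (fun j => P (e2 j)) m
          rw [hstep, hν.1.2 _ _ (hDmeas m) (hPmeas _)]
          exact max_le ih (hPbound _)
      set C : ℕ → Set E := fun m => (P0 ∪ PT) ∪ D m with hCdef
      have hCmeas : ∀ m, MeasurableSet (C m) :=
        fun m => (hP0meas.union hPTmeas).union (hDmeas m)
      have hCmono : Monotone C := by
        intro m m' h
        refine Set.union_subset_union_right _ ?_
        intro x hx
        obtain ⟨j, hj, hxP⟩ := Set.mem_iUnion₂.1 hx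
        exact Set.mem_iUnion₂.2 ⟨j, hj.trans h, hxP⟩
      have hCcov : ⋃ m, C m = B := by
        apply subset_antisymm
        · refine Set.iUnion_subset fun m => ?_
          refine Set.union_subset
            (Set.union_subset Set.inter_subset_left Set.inter_subset_left) ?_
          refine Set.iUnion_subset fun j => Set.iUnion_subset fun _ => ?_
          exact fun x hx => hx.1.1
        · intro x hxB
          rcases eq_or_ne (c x) 0 with h0 | h0
          · exact mem_iUnion.2 ⟨0, Or.inl (Or.inl ⟨hxB, h0⟩)⟩
          rcases eq_or_ne (c x) ⊤ with hT | hT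
          · refine mem_iUnion.2 ⟨0, Or.inl (Or.inr ⟨hxB, ?_⟩)⟩
            exact Set.mem_iInter.2 fun m =>
              show (m:ℝ≥0∞) < c x from hT ▸ ENNReal.natCast_lt_top m
          · obtain ⟨k, hk⟩ := ENNReal.exists_mem_Ico_zpow h0 hT hδ1 hδT
            obtain ⟨j, hj⟩ := he2surj k
            refine mem_iUnion.2 ⟨j, Or.inr (Set.mem_iUnion₂.2 ⟨j, le_rfl, ?_⟩)⟩
            rw [hj]
            have hb0 : δ^(k-1:ℤ) ≠ 0 := (ENNReal.zpow_pos hδ0 hδT _).ne'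
            have hbT : δ^(k-1:ℤ) ≠ ⊤ := (ENNReal.zpow_lt_top hδ0 hδT _).ne
            have hlt : δ^(k-1:ℤ) < δ^(k:ℤ) := by
              have e1 : (k:ℤ) = 1 + (k-1) := by ring
              have h2 : δ^(k-1:ℤ) * 1 < δ^(k-1:ℤ) * δ :=
                ENNReal.mul_lt_mul_right hb0 hbT hδ1
              rw [mul_one, mul_comm] at h2
              calc δ^(k-1:ℤ) < δ * δ^(k-1:ℤ) := h2
              _ = δ^(1+(k-1):ℤ) := by rw [ENNReal.zpow_add hδ0 hδT, zpow_one]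
              _ = δ^(k:ℤ) := by rw [← e1]
            exact ⟨⟨hxB, lt_of_lt_of_le hlt hk.1⟩, hk.2⟩
      have hCsup : ν B = ⨆ m, ν (C m) := by
        conv_lhs => rw [← hCcov]
        exact hν.2 C hCmeas hCmono
      rw [hCsup]
      refine iSup_le fun m => ?_
      have hCm : ν (C m) = max (ν (P0 ∪ PT)) (ν (D m)) :=
        hν.1.2 _ _ (hP0meas.union hPTmeas) (hDmeas m)
      rw [hCm]
      refine max_le ?_ (hDbound m)
      rw [hν.1.2 _ _ hP0meas hPTmeas]
      refine max_le ?_ ?_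
      · rw [hP0zero]; exact zero_le
      · refine hPTR.trans (le_mul_of_one_le_left zero_le ?_)
        calc (1:ℝ≥0∞) = 1 * 1 := (one_mul 1).symm
        _ ≤ δ * δ := mul_le_mul' hδ1.le hδ1.le
    -- limit as δ → 1
    rcases eq_or_ne R ⊤ with hR | hR
    · rw [hR]; exact le_top
    · have hδj : ∀ j : ℕ, ν B ≤ (1 + ((j:ℝ≥0∞)+1)⁻¹) * (1 + ((j:ℝ≥0∞)+1)⁻¹) * R := by
        intro j
        have hne : ((j:ℝ≥0∞)+1) ≠ ⊤ :=
          ENNReal.add_ne_top.2 ⟨ENNReal.natCast_ne_top j, ENNReal.one_ne_top⟩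
        have hinv0 : ((j:ℝ≥0∞)+1)⁻¹ ≠ 0 := ENNReal.inv_ne_zero.2 hne
        have h1 : (1:ℝ≥0∞) < 1 + ((j:ℝ≥0∞)+1)⁻¹ :=
          ENNReal.lt_add_right ENNReal.one_ne_top hinv0
        have h2 : 1 + ((j:ℝ≥0∞)+1)⁻¹ ≠ ⊤ := by
          refine ENNReal.add_ne_top.2 ⟨ENNReal.one_ne_top, ?_⟩
          refine ENNReal.inv_ne_top.2 ?_
          exact (lt_of_lt_of_le zero_lt_one le_add_self).ne'
        exact hmain _ h1 h2
      have hinvt : Tendsto (fun j : ℕ => ((j:ℝ≥0∞)+1)⁻¹) atTop (nhds 0) := by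
        have hcomp := ENNReal.tendsto_inv_nat_nhds_zero.comp (tendsto_add_atTop_nat 1)
        have heq : ((fun n : ℕ => (n:ℝ≥0∞)⁻¹) ∘ fun j : ℕ => j + 1)
            = fun j : ℕ => ((j:ℝ≥0∞)+1)⁻¹ := by
          funext j
          simp [Function.comp]
        rwa [heq] at hcomp
      have hone : Tendsto (fun j : ℕ => 1 + ((j:ℝ≥0∞)+1)⁻¹) atTop (nhds 1) := by
        have := Tendsto.const_add (1:ℝ≥0∞) hinvt
        simpa using this
      have hmul : Tendsto (fun j : ℕ => (1 + ((j:ℝ≥0∞)+1)⁻¹) * (1 + ((j:ℝ≥0∞)+1)⁻¹))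
          atTop (nhds 1) := by
        have := ENNReal.Tendsto.mul hone (Or.inl one_ne_zero) hone (Or.inl one_ne_zero)
        simpa using this
      have hfinal : Tendsto
          (fun j : ℕ => (1 + ((j:ℝ≥0∞)+1)⁻¹) * (1 + ((j:ℝ≥0∞)+1)⁻¹) * R) atTop (nhds R) := by
        have := ENNReal.Tendsto.mul_const (b := R) hmul (Or.inl one_ne_zero)
        simpa using this
      exact ge_of_tendsto' hfinal hδj
  -- conclusion
  refine ⟨c, hc, fun B hB => ?_⟩
  refine le_antisymm ?_ (iSup₂_le fun t ht => LB B hB t ht)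
  obtain ⟨Ef, hEmeas, hEcov, hEfin⟩ := hfin
  have hUmeas : ∀ n, MeasurableSet (acc Ef n) := acc_meas hEmeas
  have hUfin : ∀ n, τ (acc Ef n) ≠ ⊤ := by
    intro n
    induction n with
    | zero => exact (hEfin 0).ne
    | succ n ih =>
      show τ (acc Ef n ∪ Ef (n+1)) ≠ ⊤
      rw [hτ.1.2 _ _ (hUmeas n) (hEmeas (n+1))]
      exact (max_lt (lt_top_iff_ne_top.2 ih) (hEfin (n+1))).ne
  have hBcov : B = ⋃ n, B ∩ acc Ef n := by
    rw [← Set.inter_iUnion, iUnion_acc, hEcov, Set.inter_univ]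
  have hmono : Monotone (fun n => B ∩ acc Ef n) :=
    fun m m' h => Set.inter_subset_inter_right _ (acc_mono Ef h)
  calc ν B = ⨆ n, ν (B ∩ acc Ef n) := by
        conv_lhs => rw [hBcov]
        exact hν.2 _ (fun n => hB.inter (hUmeas n)) hmono
  _ ≤ ⨆ t ∈ Set.Iio (⊤ : ℝ≥0∞), t * τ (B ∩ {x | t < c x}) := by
      refine iSup_le fun n => ?_
      have h1 : τ (B ∩ acc Ef n) ≠ ⊤ := by
        intro hcon
        exact hUfin n (top_le_iff.1 (hcon ▸
          hτ.1.mono (hB.inter (hUmeas n)) (hUmeas n) Set.inter_subset_right))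
      refine (UBfin _ (hB.inter (hUmeas n)) h1).trans ?_
      refine iSup₂_mono fun t ht => ?_
      refine mul_le_mul_right (hτ.1.mono ((hB.inter (hUmeas n)).inter (hc t))
        (hB.inter (hc t)) ?_) t
      exact fun x hx => ⟨hx.1.1, hx.2⟩

end RNbackward

/-- A σ-maxitive measure `τ` has the Radon–Nikodym property with respect to the Shilkret
integral iff it is σ-finite and σ-principal. -/
theorem shilkret_rnProperty_iff [MeasurableSpace E] (τ : Set E → ℝ≥0∞)
    (hτ : SigmaMaxitive τ) :
    (∀ ν : Set E → ℝ≥0∞, SigmaMaxitive ν →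
        (∀ B : Set E, MeasurableSet B → ν B ≤ ⊤ * τ B) →
        ∃ c : E → ℝ≥0∞, Premeasurable c ∧ ∀ B : Set E, MeasurableSet B →
          ν B = ⨆ t ∈ Set.Iio (⊤ : ℝ≥0∞), t * τ (B ∩ {x | t < c x})) ↔
    ((∃ B : ℕ → Set E, (∀ n, MeasurableSet (B n)) ∧ (⋃ n, B n) = Set.univ ∧
        ∀ n, τ (B n) < ⊤) ∧ SigmaPrincipal τ) := by
  constructor
  · intro hRN
    exact ⟨rn_sigmaFinite hτ hRN, rn_sigmaPrincipal hτ hRN⟩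
  · rintro ⟨hfin, hprin⟩ ν hν hac
    exact rn_exists hτ hfin hprin ν hν hac
end

section
/- (Murofushi–Sugeno–Agbeko) A set function ν on a σ-algebra 𝓑 is an optimal measure if and only if it is a maxitive measure that is continuous from above. In this case, for every sequence (Bₙ)_{n∈ℕ} of elements of 𝓑, ν(⋃ₙ Bₙ) = maxₙ ν(Bₙ), where the supremum supₙ ν(Bₙ) is attained at some index. -/
open scoped ENNReal
open Set Filter MeasureTheory

variable {E : Type*}

private lemma maxitive_mono [MeasurableSpace E] {ν : Set E → ℝ≥0∞} (h : Maxitive ν)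
    {A B : Set E} (hA : MeasurableSet A) (hB : MeasurableSet B) (hAB : A ⊆ B) :
    ν A ≤ ν B := by
  have := h.2 A B hA hB
  rw [Set.union_eq_self_of_subset_left hAB] at this
  rw [this]; exact le_max_left _ _

private lemma accumulate_succ' {B : ℕ → Set E} (n : ℕ) :
    Set.accumulate B (n + 1) = Set.accumulate B n ∪ B (n + 1) := by
  ext x
  simp only [Set.mem_accumulate, Set.mem_union, Nat.le_add_one_iff]
  constructor
  · rintro ⟨m, hm | hm, hx⟩
    · exact Or.inl ⟨m, hm, hx⟩
    · subst hm; exact Or.inr hx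
  · rintro (⟨m, hm, hx⟩ | hx)
    · exact ⟨m, Or.inl hm, hx⟩
    · exact ⟨n + 1, Or.inr rfl, hx⟩

private lemma measurableSet_accumulate' [MeasurableSpace E] {B : ℕ → Set E}
    (hB : ∀ n, MeasurableSet (B n)) (n : ℕ) : MeasurableSet (Set.accumulate B n) := by
  rw [Set.accumulate_def]
  exact MeasurableSet.biUnion (Set.to_countable _) fun m _ => hB m

private lemma maxitive_acc [MeasurableSpace E] {ν : Set E → ℝ≥0∞} (h : Maxitive ν)
    {B : ℕ → Set E} (hB : ∀ n, MeasurableSet (B n)) (n : ℕ) :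
    ∃ m ≤ n, ν (Set.accumulate B n) = ν (B m) := by
  induction n with
  | zero => exact ⟨0, le_rfl, by simp [Set.accumulate_def]⟩
  | succ n ih =>
    obtain ⟨m, hm, hν⟩ := ih
    rw [accumulate_succ', h.2 _ _ (measurableSet_accumulate' hB n) (hB (n + 1)), hν]
    rcases le_total (ν (B m)) (ν (B (n + 1))) with hle | hle
    · exact ⟨n + 1, le_rfl, by simp [max_eq_right hle]⟩
    · exact ⟨m, hm.trans (Nat.le_succ n), by simp [max_eq_left hle]⟩

/-- (Murofushi–Sugeno–Agbeko) A set function is an optimal measure iff it is a maxitive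
measure continuous from above; in this case, for every sequence `(Bₙ)` of measurable sets,
`ν (⋃ₙ Bₙ) = maxₙ ν (Bₙ)`, the supremum being attained. -/
theorem optimal_iff_maxitive_contFromAbove [MeasurableSpace E] (ν : Set E → ℝ≥0∞)
    (hν0 : ν ∅ = 0) :
    (Optimal ν ↔ Maxitive ν ∧ ContFromAbove ν) ∧
    (Optimal ν → ∀ B : ℕ → Set E, (∀ n, MeasurableSet (B n)) →
      ∃ n : ℕ, ν (⋃ m, B m) = ν (B n) ∧ ∀ m : ℕ, ν (B m) ≤ ν (B n)) := by
  classical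
  have main : Maxitive ν → ContFromAbove ν → ContFromBelow ν := by
    intro hmax habove B hBm hBmono
    set U := ⋃ n, B n with hU
    have hUm : MeasurableSet U := MeasurableSet.iUnion hBm
    set C : ℕ → Set E := fun n => U \ B n with hC
    have hCm : ∀ n, MeasurableSet (C n) := fun n => hUm.diff (hBm n)
    have hCanti : Antitone C := fun a b hab =>
      Set.diff_subset_diff_right (hBmono hab)
    have hCint : ⋂ n, C n = ∅ := by
      rw [Set.eq_empty_iff_forall_notMem]
      intro x hx
      have hx' := Set.mem_iInter.mp hx
      obtain ⟨n, hn⟩ := Set.mem_iUnion.mp ((hx' 0).1)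
      exact (hx' n).2 hn
    have hC0 : Tendsto (fun n => ν (C n)) atTop (nhds 0) := by
      have := habove C hCm hCanti
      rwa [hCint, hmax.1] at this
    have hBmono' : Monotone fun n => ν (B n) := fun a b hab =>
      maxitive_mono hmax (hBm a) (hBm b) (hBmono hab)
    have hBtend : Tendsto (fun n => ν (B n)) atTop (nhds (⨆ n, ν (B n))) :=
      tendsto_atTop_iSup hBmono'
    have hsplit : ∀ n, ν U = max (ν (B n)) (ν (C n)) := by
      intro n
      have : B n ∪ C n = U := by
        rw [hC, Set.union_diff_cancel' subset_rfl (Set.subset_iUnion B n)]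
      rw [← this, hmax.2 _ _ (hBm n) (hCm n)]
    have htend : Tendsto (fun n => ν U) atTop (nhds (max (⨆ n, ν (B n)) 0)) :=
      Filter.Tendsto.congr (fun n => (hsplit n).symm) (hBtend.max hC0)
    have : ν U = max (⨆ n, ν (B n)) 0 :=
      tendsto_nhds_unique tendsto_const_nhds htend
    rw [max_eq_left zero_le] at this
    rw [this]
    exact hBtend
  refine ⟨⟨fun h => ⟨h.1, h.2.2⟩, fun h => ⟨h.1, main h.1 h.2, h.2⟩⟩, ?_⟩
  rintro ⟨hmax, hbelow, habove⟩ B hBm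
  set U := ⋃ n, B n with hU
  have hUm : MeasurableSet U := MeasurableSet.iUnion hBm
  have hle : ∀ m, ν (B m) ≤ ν U :=
    fun m => maxitive_mono hmax (hBm m) hUm (Set.subset_iUnion B m)
  by_cases hU0 : ν U = 0
  · have h0 : ν (B 0) = 0 := le_antisymm (hU0 ▸ hle 0) zero_le
    exact ⟨0, by rw [hU0, h0], fun m => by rw [h0]; exact (hle m).trans hU0.le⟩
  · set C : ℕ → Set E := fun n => U \ Set.accumulate B n with hC
    have hAm : ∀ n, MeasurableSet (Set.accumulate B n) := fun n => measurableSet_accumulate' hBm n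
    have hCm : ∀ n, MeasurableSet (C n) := fun n => hUm.diff (hAm n)
    have hCanti : Antitone C := fun a b hab =>
      Set.diff_subset_diff_right (Set.monotone_accumulate hab)
    have hCint : ⋂ n, C n = ∅ := by
      rw [Set.eq_empty_iff_forall_notMem]
      intro x hx
      have hx' := Set.mem_iInter.mp hx
      obtain ⟨n, hn⟩ := Set.mem_iUnion.mp ((hx' 0).1)
      exact (hx' n).2 (Set.mem_accumulate.mpr ⟨n, le_rfl, hn⟩)
    have hC0 : Tendsto (fun n => ν (C n)) atTop (nhds 0) := by
      have := habove C hCm hCanti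
      rwa [hCint, hmax.1] at this
    have hUpos : 0 < ν U := pos_iff_ne_zero.mpr hU0
    have hev : ∀ᶠ n in atTop, ν (C n) < ν U :=
      hC0.eventually_lt_const hUpos
    obtain ⟨n, hn⟩ := hev.exists
    have hsplit : ν U = max (ν (Set.accumulate B n)) (ν (C n)) := by
      have heq : Set.accumulate B n ∪ C n = U := by
        rw [hC, Set.union_diff_cancel' subset_rfl]
        intro x hx
        obtain ⟨m, hm, hxm⟩ := Set.mem_accumulate.mp hx
        exact Set.mem_iUnion.mpr ⟨m, hxm⟩
      rw [← heq, hmax.2 _ _ (hAm n) (hCm n)]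
    have hAcc : ν (Set.accumulate B n) = ν U := by
      rcases max_cases (ν (Set.accumulate B n)) (ν (C n)) with ⟨h1, _⟩ | ⟨h1, h2⟩
      · rw [hsplit, h1]
      · rw [hsplit, h1] at hn; exact absurd hn (lt_irrefl _)
    obtain ⟨m, _, hm⟩ := maxitive_acc hmax hBm n
    exact ⟨m, by rw [← hAcc, hm], fun k => (hle k).trans_eq (by rw [← hAcc, hm])⟩
end

section
/- A σ-maxitive measure on a σ-algebra 𝓑 is optimal if and only if it is exhaustive. -/
open scoped ENNReal
open Set Filter MeasureTheory

variable {E : Type*}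

/-- `ν` is exhaustive: `ν (Bₙ) → 0` along every pairwise disjoint sequence of
measurable sets. -/
def Exhaustive [MeasurableSpace E] (ν : Set E → ℝ≥0∞) : Prop :=
  ∀ B : ℕ → Set E, (∀ n, MeasurableSet (B n)) →
    (Pairwise fun m n => Disjoint (B m) (B n)) →
    Tendsto (fun n => ν (B n)) atTop (nhds 0)

private lemma sigma_union [MeasurableSpace E] {ν : Set E → ℝ≥0∞} (h : SigmaMaxitive ν)
    (A : ℕ → Set E) (hA : ∀ n, MeasurableSet (A n)) :
    ν (⋃ n, A n) = ⨆ n, ν (A n) := by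
  have hacc : ∀ n, MeasurableSet (Set.accumulate A n) := fun n =>
    MeasurableSet.biUnion (Set.to_countable _) (fun i _ => hA i)
  have h1 : ν (⋃ n, Set.accumulate A n) = ⨆ n, ν (Set.accumulate A n) :=
    h.2 _ hacc monotone_accumulate
  rw [Set.iUnion_accumulate] at h1
  have hzero : Set.accumulate A 0 = A 0 := by
    ext x; simp [Set.mem_accumulate, Nat.le_zero]
  have hstep : ∀ n, Set.accumulate A (n + 1) = Set.accumulate A n ∪ A (n + 1) := by
    intro n; ext x
    simp only [Set.mem_accumulate, Set.mem_union]
    constructor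
    · rintro ⟨y, hy, hxy⟩
      rcases Nat.lt_or_ge y (n + 1) with h' | h'
      · exact Or.inl ⟨y, by omega, hxy⟩
      · exact Or.inr (by rwa [show y = n + 1 by omega] at hxy)
    · rintro (⟨y, hy, hxy⟩ | hx)
      · exact ⟨y, by omega, hxy⟩
      · exact ⟨n + 1, le_rfl, hx⟩
  rw [h1]
  apply le_antisymm
  · apply iSup_le; intro n
    induction n with
    | zero => rw [hzero]; exact le_iSup (fun i => ν (A i)) 0
    | succ n ih =>
      rw [hstep n, h.1.2 _ _ (hacc n) (hA (n+1))]
      exact max_le ih (le_iSup (fun i => ν (A i)) (n+1))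
  · exact iSup_mono fun n => maxitive_mono h.1 (hA n) (hacc n) (Set.subset_accumulate)

/-- A σ-maxitive measure is optimal if and only if it is exhaustive. -/
theorem sigmaMaxitive_optimal_iff_exhaustive [MeasurableSpace E]
    (ν : Set E → ℝ≥0∞) (hν : SigmaMaxitive ν) :
    Optimal ν ↔ Exhaustive ν := by
  have hmax := hν.1
  have hbelow : ContFromBelow ν := by
    intro B hB hmono
    rw [hν.2 B hB hmono]
    exact tendsto_atTop_iSup (fun m n hmn => maxitive_mono hmax (hB m) (hB n) (hmono hmn))
  constructor
  · rintro ⟨-, -, habove⟩ B hB hdisj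
    set C : ℕ → Set E := fun n => ⋃ k, B (n + k) with hC
    have hCm : ∀ n, MeasurableSet (C n) := fun n => MeasurableSet.iUnion fun k => hB _
    have hCanti : Antitone C := by
      intro m n hmn
      apply Set.iUnion_subset; intro k
      have he : n + k = m + ((n - m) + k) := by omega
      rw [he]; exact Set.subset_iUnion (fun k => B (m + k)) _
    have hCint : (⋂ n, C n) = ∅ := by
      ext x; simp only [hC, Set.mem_iInter, Set.mem_iUnion, Set.mem_empty_iff_false, iff_false]
      intro h
      obtain ⟨k₀, hk₀⟩ := h 0
      obtain ⟨k₁, hk₁⟩ := h (0 + k₀ + 1)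
      exact (hdisj (show (0 + k₀ : ℕ) ≠ 0 + k₀ + 1 + k₁ by omega)).le_bot ⟨hk₀, hk₁⟩
    have h0 : Tendsto (fun n => ν (C n)) atTop (nhds 0) := by
      have := habove C hCm hCanti
      rwa [hCint, hmax.1] at this
    rw [ENNReal.tendsto_nhds_zero] at h0 ⊢
    intro ε hε
    filter_upwards [h0 ε hε] with n hn
    exact le_trans (maxitive_mono hmax (hB n) (hCm n)
      (by simpa using Set.subset_iUnion (fun k => B (n + k)) 0)) hn
  · intro hex
    refine ⟨hmax, hbelow, ?_⟩
    intro B hB hanti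
    set D : ℕ → Set E := fun n => B n \ B (n + 1) with hD
    have hDm : ∀ n, MeasurableSet (D n) := fun n => (hB n).diff (hB (n+1))
    have hDdisj : Pairwise fun m n => Disjoint (D m) (D n) := by
      have hkey : ∀ m n : ℕ, m < n → Disjoint (D m) (D n) := by
        intro m n h
        apply Set.disjoint_left.mpr
        intro x hxm hxn
        exact hxm.2 (hanti (show m + 1 ≤ n by omega) hxn.1)
      intro m n hmn
      rcases hmn.lt_or_gt with h | h
      · exact hkey m n h
      · exact (hkey n m h).symm
    have hIm : MeasurableSet (⋂ k, B k) := MeasurableSet.iInter hB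
    have key : ∀ n, B n = (⋂ k, B k) ∪ ⋃ k, D (n + k) := by
      classical
      intro n
      apply Set.Subset.antisymm
      · intro x hx
        by_cases hall : ∀ k, x ∈ B k
        · exact Or.inl (Set.mem_iInter.mpr hall)
        · push_neg at hall
          have hne : ∃ k, x ∉ B k := hall
          right
          have hk₀ : x ∉ B (Nat.find hne) := Nat.find_spec hne
          have hgt : n < Nat.find hne := by
            by_contra hle; push_neg at hle
            exact hk₀ (hanti hle hx)
          have hmem : x ∈ B (Nat.find hne - 1) := by
            have := Nat.find_min hne (show Nat.find hne - 1 < Nat.find hne by omega)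
            simpa using not_not.mp (by simpa using this)
          refine Set.mem_iUnion.mpr ⟨Nat.find hne - 1 - n, ?_⟩
          have he : n + (Nat.find hne - 1 - n) = Nat.find hne - 1 := by omega
          rw [hD]; dsimp only
          rw [he]
          exact ⟨hmem, by rwa [show Nat.find hne - 1 + 1 = Nat.find hne by omega]⟩
      · apply Set.union_subset
        · exact Set.iInter_subset _ n
        · apply Set.iUnion_subset; intro k
          exact Set.diff_subset.trans (hanti (show n ≤ n + k by omega))
    have hνB : ∀ n, ν (B n) = max (ν (⋂ k, B k)) (⨆ k, ν (D (n + k))) := by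
      intro n
      rw [key n, hmax.2 _ _ hIm (MeasurableSet.iUnion fun k => hDm _),
        sigma_union hν _ (fun k => hDm _)]
    have hDten : Tendsto (fun n => ν (D n)) atTop (nhds 0) := hex D hDm hDdisj
    have hs : Tendsto (fun n => ⨆ k, ν (D (n + k))) atTop (nhds 0) := by
      rw [ENNReal.tendsto_nhds_zero]
      intro ε hε
      rw [ENNReal.tendsto_nhds_zero] at hDten
      obtain ⟨N, hN⟩ := eventually_atTop.mp (hDten ε hε)
      refine eventually_atTop.mpr ⟨N, fun n hn => ?_⟩
      exact iSup_le fun k => hN (n + k) (by omega)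
    have hfin : Tendsto (fun n => max (ν (⋂ k, B k)) (⨆ k, ν (D (n + k)))) atTop
        (nhds (max (ν (⋂ k, B k)) 0)) := tendsto_const_nhds.max hs
    rw [max_eq_left zero_le] at hfin
    exact hfin.congr fun n => (hνB n).symm
end
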